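/- arXiv:math/9411207 — 6 statements merged into one kernel-verified Lean document; each statement's English description precedes it below -/
import Mathlib

section
/- For every natural number n there exists exactly one binary operation * on the set {0,1,…,2^n−1} (equivalently on Fin (2^n)) such that * is left self-distributive, i.e. a*(b*c) = (a*b)*(a*c) for all a,b,c, and a*1 = a+1 (mod 2^n) for all a. -/
open Fin.NatCast

namespace LaverLD

def lav (N : ℕ) : ℕ → ℕ → ℕ → ℕ
  | fuel, a, b =>
    if N ≤ a then b
    else
      match fuel, b with
      | _, 0 => 0
      | _, 1 => a + 1
      | 0, _ => 0
      | f + 1, b + 2 => lav N f (lav N (f + 1) a (b + 1)) (a + 1)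
termination_by fuel _ b => (fuel, b)

def T (N a b : ℕ) : ℕ := lav N (N - a) a b

lemma lav_top {N a : ℕ} (fuel b : ℕ) (h : N ≤ a) : lav N fuel a b = b := by
  rw [lav.eq_def]; dsimp only; rw [if_pos h]

lemma lav_one {N a : ℕ} (fuel : ℕ) (h : a < N) : lav N fuel a 1 = a + 1 := by
  rw [lav.eq_def]; dsimp only; rw [if_neg (Nat.not_le.mpr h)]

lemma lav_step {N a : ℕ} (f b : ℕ) (h : a < N) :
    lav N (f + 1) a (b + 2) = lav N f (lav N (f + 1) a (b + 1)) (a + 1) := by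
  conv_lhs => rw [lav.eq_def]
  dsimp only
  rw [if_neg (Nat.not_le.mpr h)]

lemma T_top {N a : ℕ} (b : ℕ) (h : N ≤ a) : T N a b = b := lav_top _ _ h

lemma T_one {N a : ℕ} (h : a < N) : T N a 1 = a + 1 := lav_one _ h

theorem lav_spec (N a b fuel : ℕ) (ha : a < N) (hf : N - a ≤ fuel) (hb : 1 ≤ b) :
    lav N fuel a b = T N a b ∧ a < T N a b ∧ T N a b ≤ N := by
  obtain ⟨f, rfl⟩ : ∃ f, fuel = f + 1 := ⟨fuel - 1, by omega⟩
  obtain ⟨g, hg⟩ : ∃ g, N - a = g + 1 := ⟨N - a - 1, by omega⟩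
  match b, hb with
  | 1, _ =>
    rw [lav_one _ ha]
    rw [show T N a 1 = a + 1 from T_one ha]
    exact ⟨rfl, by omega, by omega⟩
  | (b' + 2), _ =>
    have ih1 := lav_spec N a (b' + 1) (f + 1) ha hf (by omega)
    set x := T N a (b' + 1) with hxdef
    have hax : a < x := ih1.2.1
    have hxN : x ≤ N := ih1.2.2
    have e1 : lav N (f + 1) a (b' + 2) = lav N f x (a + 1) := by
      rw [lav_step _ _ ha, ih1.1]
    have e2 : T N a (b' + 2) = lav N g x (a + 1) := by
      show lav N (N - a) a (b' + 2) = _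
      rw [hg, lav_step _ _ ha, ← hg, hxdef]; rfl
    by_cases hxtop : N ≤ x
    · rw [e1, e2, lav_top _ _ hxtop, lav_top _ _ hxtop]
      exact ⟨rfl, by omega, by omega⟩
    · push_neg at hxtop
      have ihf := lav_spec N x (a + 1) f hxtop (by omega) (by omega)
      have ihg := lav_spec N x (a + 1) g hxtop (by omega) (by omega)
      rw [e1, e2, ihf.1, ihg.1]
      exact ⟨rfl, by omega, ihf.2.2⟩
termination_by (N - a, b)
decreasing_by
  · exact Prod.Lex.right _ (by omega)
  · exact Prod.Lex.left _ _ (by omega)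
  · exact Prod.Lex.left _ _ (by omega)

lemma T_bounds {N a : ℕ} (b : ℕ) (ha : a < N) (hb : 1 ≤ b) :
    a < T N a b ∧ T N a b ≤ N :=
  (lav_spec N a b (N - a) ha le_rfl hb).2

lemma T_succ {N a : ℕ} (b : ℕ) (ha : a < N) (hb : 1 ≤ b) :
    T N a (b + 1) = T N (T N a b) (a + 1) := by
  obtain ⟨g, hg⟩ : ∃ g, N - a = g + 1 := ⟨N - a - 1, by omega⟩
  obtain ⟨b', rfl⟩ : ∃ b', b = b' + 1 := ⟨b - 1, by omega⟩
  have e2 : T N a (b' + 2) = lav N g (T N a (b' + 1)) (a + 1) := by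
    show lav N (N - a) a (b' + 2) = _
    rw [hg, lav_step _ _ ha, ← hg]; try rfl
  set x := T N a (b' + 1) with hxdef
  have hb := T_bounds (b' + 1) ha (by omega)
  by_cases hxtop : N ≤ x
  · rw [e2, lav_top _ _ hxtop, T_top _ hxtop]
  · push_neg at hxtop
    rw [e2, (lav_spec N x (a + 1) g hxtop (by omega) (by omega)).1]


lemma T_pos {N a b : ℕ} (hb : 1 ≤ b) : 1 ≤ T N a b := by
  by_cases h : N ≤ a
  · rw [T_top _ h]; exact hb
  · push_neg at h
    have := (T_bounds b h hb).1; omega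

lemma T_le {N a b : ℕ} (hb : b ≤ N) (hb1 : 1 ≤ b) : T N a b ≤ N := by
  by_cases h : N ≤ a
  · rw [T_top _ h]; exact hb
  · push_neg at h
    exact (T_bounds b h hb1).2

lemma T_incr {N a b : ℕ} (ha : a < N) (hb : 1 ≤ b) (hlt : T N a b < N) :
    T N a b < T N a (b + 1) := by
  rw [T_succ b ha hb]
  exact (T_bounds (a + 1) hlt (by omega)).1

lemma T_wrap {N a b : ℕ} (ha : a < N) (hb : 1 ≤ b) (htop : T N a b = N) :
    T N a (b + 1) = a + 1 := by
  rw [T_succ b ha hb, htop, T_top _ le_rfl]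

lemma T_growth {N a : ℕ} (ha : a < N) :
    ∀ b, 1 ≤ b → (∀ j, 1 ≤ j → j ≤ b → T N a j < N) → a + b ≤ T N a b := by
  intro b
  induction b with
  | zero => omega
  | succ b ih =>
    intro _ hall
    rcases Nat.eq_or_lt_of_le (show 1 ≤ b + 1 by omega) with h1 | h1
    · have hb0 : b = 0 := by omega
      subst hb0
      have := T_one (N := N) ha
      simp only [Nat.zero_add]
      omega
    · have hb1 : 1 ≤ b := by omega
      have h2 := ih hb1 (fun j hj hjb => hall j hj (by omega))
      have h3 := T_incr ha hb1 (hall b hb1 (by omega))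
      omega

lemma exists_hit {N a : ℕ} (ha : a < N) : ∃ b, (1 ≤ b ∧ T N a b = N) ∧ b ≤ N := by
  by_contra h
  push_neg at h
  have hall : ∀ j, 1 ≤ j → j ≤ N - a → T N a j < N := by
    intro j hj hjN
    have h1 := T_le (N := N) (a := a) (b := j) (by omega) hj
    rcases Nat.lt_or_ge (T N a j) N with h2 | h2
    · exact h2
    · have : T N a j = N := by omega
      have := h j ⟨hj, this⟩
      omega
  have := T_growth ha (N - a) (by omega) hall
  have := hall (N - a) (by omega) le_rfl
  omega

section Row

variable {N a m : ℕ} (ha : a < N) (hm1 : 1 ≤ m) (hhit : T N a m = N)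
  (hleast : ∀ j, 1 ≤ j → j < m → T N a j ≠ N)

include ha hm1 hhit in
lemma T_period : ∀ b, 1 ≤ b → T N a (b + m) = T N a b := by
  intro b
  induction b with
  | zero => omega
  | succ b ih =>
    intro _
    rcases Nat.eq_or_lt_of_le (show 1 ≤ b + 1 by omega) with h1 | h1
    · have : (1 : ℕ) + m = m + 1 := by omega
      rw [← h1, this, T_wrap ha hm1 hhit, T_one ha]
    · have hb1 : 1 ≤ b := by omega
      have : b + 1 + m = (b + m) + 1 := by omega
      rw [this, T_succ _ ha (by omega), ih hb1, ← T_succ _ ha hb1]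

include ha hm1 hhit in
lemma T_period_mul : ∀ q b, 1 ≤ b → T N a (b + q * m) = T N a b := by
  intro q
  induction q with
  | zero => simp
  | succ q ih =>
    intro b hb
    have : b + (q + 1) * m = (b + q * m) + m := by ring
    rw [this, T_period ha hm1 hhit _ (by omega), ih b hb]

include ha hm1 hhit in
lemma T_hit_mul : ∀ q, 1 ≤ q → T N a (q * m) = N := by
  intro q hq
  obtain ⟨q', rfl⟩ : ∃ q', q = q' + 1 := ⟨q - 1, by omega⟩
  have : (q' + 1) * m = m + q' * m := by ring
  rw [this, T_period_mul ha hm1 hhit q' m hm1, hhit]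

include ha hm1 hhit hleast in
lemma T_dvd_of_hit {b : ℕ} (hb : 1 ≤ b) (h : T N a b = N) : m ∣ b := by
  rcases Nat.eq_zero_or_pos (b % m) with hr | hr
  · exact Nat.dvd_of_mod_eq_zero hr
  · exfalso
    have hdm := Nat.div_add_mod b m
    have hrm : b % m < m := Nat.mod_lt _ (by omega)
    have hc : m * (b / m) = (b / m) * m := Nat.mul_comm _ _
    have heq : b = b % m + (b / m) * m := by omega
    rw [heq, T_period_mul ha hm1 hhit _ _ hr] at h
    exact hleast _ hr hrm h

include ha hm1 hhit in
lemma T_hit_of_dvd {b : ℕ} (hb : 1 ≤ b) (h : m ∣ b) : T N a b = N := by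
  obtain ⟨q, rfl⟩ := h
  have hq : 1 ≤ q := by
    rcases Nat.eq_zero_or_pos q with h0 | h0
    · subst h0; simp at hb
    · exact h0
  have : m * q = q * m := by ring
  rw [this, T_hit_mul ha hm1 hhit q hq]

include ha hleast in
lemma T_lt_top {b : ℕ} (hb : 1 ≤ b) (hbm : b < m) : T N a b < N := by
  have h1 := (T_bounds b ha hb).2
  have h2 := hleast b hb hbm
  omega

include ha hm1 hhit hleast in
lemma T_mono {j k : ℕ} (hj : 1 ≤ j) (hjk : j < k) (hk : k ≤ m) :
    T N a j < T N a k := by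
  induction k with
  | zero => omega
  | succ k ih =>
    rcases Nat.eq_or_lt_of_le (Nat.succ_le_of_lt hjk) with h1 | h1
    · have : j = k := by omega
      subst this
      exact T_incr ha hj (T_lt_top ha hleast hj (by omega))
    · have h2 := ih (by omega) (by omega)
      have h3 := T_incr ha (show 1 ≤ k by omega) (T_lt_top ha hleast (by omega) (by omega))
      omega

end Row


def allN (N : ℕ) : Prop := ∀ a, 1 ≤ a → T N a N = N

lemma allN_one : allN 1 := fun a ha => T_top 1 ha

def red (N x : ℕ) : ℕ := (x - 1) % N + 1

lemma red_pos {N x : ℕ} : 1 ≤ red N x := by unfold red; omega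

lemma red_le {N x : ℕ} (hN : 0 < N) : red N x ≤ N := by
  unfold red
  have := Nat.mod_lt (x - 1) hN
  omega

lemma red_eq_self {N x : ℕ} (h1 : 1 ≤ x) (h2 : x ≤ N) : red N x = x := by
  unfold red
  rw [Nat.mod_eq_of_lt (by omega)]
  omega

lemma red_mod_succ {N x : ℕ} (hx : 1 ≤ x) : x % N = ((x - 1) % N + 1 % N) % N := by
  conv_lhs => rw [show x = (x - 1) + 1 by omega]
  rw [Nat.add_mod]

lemma red_succ_lt {N x : ℕ} (hN : 0 < N) (hx : 1 ≤ x) (h : red N x < N) :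
    red N (x + 1) = red N x + 1 := by
  have hN2 : 2 ≤ N := by
    have : 0 ≤ (x - 1) % N := Nat.zero_le _
    unfold red at h; omega
  unfold red at *
  have h1 : x + 1 - 1 = x := by omega
  rw [h1, red_mod_succ hx, Nat.mod_eq_of_lt (show (1:ℕ) < N by omega),
    Nat.mod_eq_of_lt (by omega)]

lemma red_succ_top {N x : ℕ} (hN : 0 < N) (hx : 1 ≤ x) (h : red N x = N) :
    red N (x + 1) = 1 := by
  rcases Nat.lt_or_ge N 2 with hN2 | hN2
  · have : N = 1 := by omega
    subst this
    unfold red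
    simp [Nat.mod_one]
  · unfold red at *
    have h1 : x + 1 - 1 = x := by omega
    rw [h1, red_mod_succ hx, Nat.mod_eq_of_lt (show (1:ℕ) < N by omega)]
    have : (x - 1) % N + 1 = N := by omega
    rw [this, Nat.mod_self]

lemma red_dvd_iff {N x d : ℕ} (hN : 0 < N) (hd : d ∣ N) (hx : 1 ≤ x) :
    (d ∣ red N x ↔ d ∣ x) := by
  have hdm := Nat.div_add_mod (x - 1) N
  have hq : x = N * ((x - 1) / N) + red N x := by unfold red; omega
  have hdN : d ∣ N * ((x - 1) / N) := Dvd.dvd.mul_right hd _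
  constructor
  · intro h
    rw [hq]
    exact Nat.dvd_add hdN h
  · intro h
    have := (Nat.dvd_add_right hdN).mp (hq ▸ h)
    exact this

lemma red_top_iff {N x : ℕ} (hN : 0 < N) (hx : 1 ≤ x) (hx2 : x ≤ 2 * N) :
    (red N x = N ↔ (x = N ∨ x = 2 * N)) := by
  rcases le_or_gt x N with hc | hc
  · rw [red_eq_self hx hc]
    omega
  · have h1 : x - 1 - N < N := by omega
    have h2 : (x - 1) % N = x - 1 - N := by
      rw [Nat.mod_eq_sub_mod (by omega), Nat.mod_eq_of_lt h1]
    unfold red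
    rw [h2]
    omega

lemma red_two_N {N : ℕ} (hN : 0 < N) : red N (2 * N) = N := by
  rw [(red_top_iff hN (by omega) le_rfl)]
  omega


theorem proj (N : ℕ) (hN : 0 < N) (hP : allN N) :
    ∀ a b, 1 ≤ a → a ≤ 2 * N → 1 ≤ b →
      red N (T (2 * N) a b) = T N (red N a) (red N b) := by
  intro a b ha1 ha2 hb1
  by_cases hA : 2 * N ≤ a
  · rw [T_top _ hA]
    have haN : a = 2 * N := by omega
    rw [haN, red_two_N hN, T_top _ le_rfl]
  · push_neg at hA
    have hra1 : 1 ≤ red N a := red_pos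
    have hraN : red N a ≤ N := red_le hN
    by_cases hb2 : b = 1
    · -- b = 1
      rw [hb2, T_one hA, red_eq_self le_rfl hN]
      by_cases hreda : red N a = N
      · rw [hreda, T_top _ le_rfl, red_succ_top hN ha1 hreda]
      · have hlt : red N a < N := by omega
        rw [T_one hlt, red_succ_lt hN ha1 hlt]
    · obtain ⟨b', heq⟩ : ∃ b', b = b' + 2 := ⟨b - 2, by omega⟩
      have hb0 : 1 ≤ b' + 1 := by omega
      have hxb := T_bounds (N := 2 * N) (a := a) (b' + 1) hA hb0
      set x := T (2 * N) a (b' + 1) with hxdef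
      have hx1 : 1 ≤ x := by omega
      have hx2 : x ≤ 2 * N := hxb.2
      have hax : a < x := hxb.1
      have estep : T (2 * N) a (b' + 1 + 1) = T (2 * N) x (a + 1) :=
        T_succ (b' + 1) hA hb0
      have ihin : red N x = T N (red N a) (red N (b' + 1)) :=
        proj N hN hP a (b' + 1) ha1 ha2 hb0
      have ihout : red N (T (2 * N) x (a + 1)) = T N (red N x) (red N (a + 1)) :=
        proj N hN hP x (a + 1) hx1 hx2 (by omega)
      rw [show b' + 1 + 1 = b' + 2 from rfl] at estep
      rw [heq, estep, ihout, ihin]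
      have hrb1 : 1 ≤ red N (b' + 1) := red_pos
      have hrbN : red N (b' + 1) ≤ N := red_le hN
      set β := red N (b' + 1) with hbdef
      by_cases hca : red N a = N
      · by_cases hcb : β = N
        · rw [hca, hcb, T_top _ le_rfl, T_top _ le_rfl,
            red_succ_top hN ha1 hca, red_succ_top hN (by omega) (hbdef ▸ hcb),
            T_top _ le_rfl]
        · have hcb' : β < N := by omega
          rw [hca, T_top _ le_rfl, red_succ_top hN ha1 hca, T_one hcb',
            red_succ_lt hN (by omega) (hbdef ▸ hcb'), T_top _ le_rfl]
      · have hca' : red N a < N := by omega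
        by_cases hcb : β = N
        · rw [hcb, hP (red N a) hra1, T_top _ le_rfl,
            red_succ_lt hN ha1 hca', red_succ_top hN (by omega) (hbdef ▸ hcb),
            T_one hca']
        · have hcb' : β < N := by omega
          rw [red_succ_lt hN ha1 hca', red_succ_lt hN (by omega) (hbdef ▸ hcb'),
            T_succ β hca' hrb1]
termination_by a b _ _ _ => (2 * N - a, b)
decreasing_by
  · exact Prod.Lex.right _ (by omega)
  · exact Prod.Lex.left _ _ (by omega)


theorem allN_double {N : ℕ} (hN : 0 < N) (hP : allN N) : allN (2 * N) := by
  intro a ha1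
  by_cases hA : 2 * N ≤ a
  · exact T_top _ hA
  · push_neg at hA
    set ra := red N a with hadef
    have hra1 : 1 ≤ ra := red_pos
    have hraN : ra ≤ N := red_le hN
    have hex1 : ∃ b, 1 ≤ b ∧ T N ra b = N := ⟨N, hN, hP ra hra1⟩
    set m₁ := Nat.find hex1 with hm1def
    obtain ⟨hm₁1, hm₁hit⟩ := Nat.find_spec hex1
    have hm₁least : ∀ j, 1 ≤ j → j < m₁ → T N ra j ≠ N := by
      intro j hj hjm hTj
      exact (Nat.find_min hex1 hjm) ⟨hj, hTj⟩
    have hm₁N : m₁ ≤ N := Nat.find_min' hex1 ⟨hN, hP ra hra1⟩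
    have hm₁dvdN : m₁ ∣ N := by
      by_cases hc : ra < N
      · exact T_dvd_of_hit hc hm₁1 hm₁hit hm₁least hN (hP ra hra1)
      · have hran : N ≤ ra := by omega
        have h2 := T_top (N := N) (a := ra) m₁ hran
        rw [h2] at hm₁hit
        rw [hm₁hit]
    have K : ∀ b, 1 ≤ b → b ≤ 2 * N →
        ((T (2 * N) a b = N ∨ T (2 * N) a b = 2 * N) ↔ m₁ ∣ b) := by
      intro b hb1 hb2
      have hbd := T_bounds (N := 2 * N) (a := a) b hA hb1
      have hc1 : 1 ≤ T (2 * N) a b := by omega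
      have hproj := proj N hN hP a b ha1 (by omega) hb1
      have htop := red_top_iff hN hc1 hbd.2
      have hmid : (T N ra (red N b) = N) ↔ m₁ ∣ red N b := by
        by_cases hc : ra < N
        · constructor
          · intro h
            exact T_dvd_of_hit hc hm₁1 hm₁hit hm₁least red_pos h
          · intro h
            exact T_hit_of_dvd hc hm₁1 hm₁hit red_pos h
        · have hran : N ≤ ra := by omega
          have h2 := T_top (N := N) (a := ra) m₁ hran
          have hm₁eq : m₁ = N := by rw [h2] at hm₁hit; exact hm₁hit
          rw [T_top _ hran, hm₁eq]
          constructor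
          · intro h
            rw [h]
          · intro h
            have h3 : N ≤ red N b := Nat.le_of_dvd (by have := red_pos (N := N) (x := b); omega) h
            have h4 : red N b ≤ N := red_le hN
            omega
      have hdvd := red_dvd_iff (x := b) hN hm₁dvdN hb1
      calc (T (2 * N) a b = N ∨ T (2 * N) a b = 2 * N)
          ↔ red N (T (2 * N) a b) = N := htop.symm
        _ ↔ T N ra (red N b) = N := by rw [hproj]
        _ ↔ m₁ ∣ red N b := hmid
        _ ↔ m₁ ∣ b := hdvd
    have hex2 : ∃ b, 1 ≤ b ∧ T (2 * N) a b = 2 * N := by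
      obtain ⟨b, ⟨h1, h2⟩, h3⟩ := exists_hit hA
      exact ⟨b, h1, h2⟩
    set m₂ := Nat.find hex2 with hm2def
    obtain ⟨hm₂1, hm₂hit⟩ := Nat.find_spec hex2
    have hm₂least : ∀ j, 1 ≤ j → j < m₂ → T (2 * N) a j ≠ 2 * N := by
      intro j hj hjm hTj
      exact (Nat.find_min hex2 hjm) ⟨hj, hTj⟩
    have hm₂2N : m₂ ≤ 2 * N := by
      obtain ⟨b, ⟨h1, h2⟩, h3⟩ := exists_hit hA
      exact le_trans (Nat.find_min' hex2 ⟨h1, h2⟩) h3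
    have hm₁m₂ : m₁ ∣ m₂ := (K m₂ hm₂1 hm₂2N).mp (Or.inr hm₂hit)
    suffices hdvd2 : m₂ ∣ 2 * N by
      exact T_hit_of_dvd hA hm₂1 hm₂hit (by omega) hdvd2
    have h1 := (K m₁ hm₁1 (by omega)).mpr dvd_rfl
    rcases h1 with hMid | hTop
    · -- T (2N) a m₁ = N : period doubles
      have hne : m₁ ≠ m₂ := by
        intro h
        rw [h, hm₂hit] at hMid
        omega
      have hlt : m₁ < m₂ := lt_of_le_of_ne (Nat.le_of_dvd (by omega) hm₁m₂) hne
      have h2m : 2 * m₁ ≤ m₂ := by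
        obtain ⟨k, hk⟩ := hm₁m₂
        rcases k with _ | _ | k
        · simp at hk; omega
        · simp at hk; omega
        · rw [hk]
          nlinarith [Nat.zero_le k, hm₁1]
      have hmono := T_mono hA hm₂1 hm₂hit hm₂least (j := m₁) (k := 2 * m₁)
        hm₁1 (by omega) h2m
      rw [hMid] at hmono
      have hk2 := (K (2 * m₁) (by omega) (by omega)).mpr ⟨2, by ring⟩
      have h2N : T (2 * N) a (2 * m₁) = 2 * N := by
        rcases hk2 with h | h
        · omega
        · exact h
      have hle : m₂ ≤ 2 * m₁ := Nat.find_min' hex2 ⟨by omega, h2N⟩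
      have heq : m₂ = 2 * m₁ := by omega
      rw [heq]
      exact Nat.mul_dvd_mul_left 2 hm₁dvdN
    · -- T (2N) a m₁ = 2N : period stays
      have hle : m₂ ≤ m₁ := Nat.find_min' hex2 ⟨hm₁1, hTop⟩
      have hge : m₁ ≤ m₂ := Nat.le_of_dvd (by omega) hm₁m₂
      have heq : m₂ = m₁ := by omega
      rw [heq]
      exact hm₁dvdN.mul_left 2

theorem allN_pow (n : ℕ) : allN (2 ^ n) := by
  induction n with
  | zero => exact allN_one
  | succ n ih =>
    have h : 2 ^ (n + 1) = 2 * 2 ^ n := by ring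
    rw [h]
    exact allN_double (Nat.two_pow_pos n) ih


theorem T_LD {N : ℕ} (hP : allN N) :
    ∀ a b c, 1 ≤ a → a ≤ N → 1 ≤ b → b ≤ N → 1 ≤ c →
      T N a (T N b c) = T N (T N a b) (T N a c) := by
  intro a b c ha1 haN hb1 hbN hc1
  by_cases hA : N ≤ a
  · rw [T_top _ hA, T_top _ hA, T_top _ hA]
  · push_neg at hA
    by_cases hB : N ≤ b
    · rw [T_top _ hB]
      have h1 : T N a b = N := by
        have hbn : b = N := by omega
        rw [hbn]
        exact hP a ha1
      rw [h1, T_top _ le_rfl]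
    · push_neg at hB
      by_cases hc : c = 1
      · subst hc
        rw [T_one hB, T_succ b hA hb1, T_one hA]
      · obtain ⟨c', hceq⟩ : ∃ c', c = c' + 1 := ⟨c - 1, by omega⟩
        have hc'1 : 1 ≤ c' := by omega
        have hbc := T_bounds (N := N) (a := b) c' hB hc'1
        have hab := T_bounds (N := N) (a := a) b hA hb1
        have hac' := T_bounds (N := N) (a := a) c' hA hc'1
        have rec1 := T_LD hP a (T N b c') (b + 1) ha1 haN (by omega) hbc.2 (by omega)
        have rec2 := T_LD hP a b c' ha1 haN hb1 hbN hc'1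
        have rec3 := T_LD hP (T N a b) (T N a c') (a + 1) (by omega) hab.2
          (by omega) hac'.2 (by omega)
        rw [hceq, T_succ c' hB hc'1, rec1, rec2, T_succ b hA hb1,
          T_succ c' hA hc'1, rec3]
termination_by a b c _ _ _ _ _ => (N - a, N - b, c)
decreasing_by
  · exact Prod.Lex.right _ (Prod.Lex.left _ _ (by omega))
  · exact Prod.Lex.right _ (Prod.Lex.right _ (by omega))
  · exact Prod.Lex.left _ _ (by omega)


section FinPart

variable {N : ℕ} [NeZero N]

def toNat (x : Fin N) : ℕ := if x.val = 0 then N else x.val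

lemma toNat_pos (x : Fin N) : 1 ≤ toNat x := by
  unfold toNat
  have := Nat.pos_of_ne_zero (NeZero.ne N)
  split <;> omega

lemma toNat_le (x : Fin N) : toNat x ≤ N := by
  unfold toNat
  have := x.isLt
  split <;> omega

lemma cast_toNat (x : Fin N) : ((toNat x : ℕ) : Fin N) = x := by
  unfold toNat
  by_cases h : x.val = 0
  · rw [if_pos h, Fin.natCast_self]
    exact Fin.ext (by simp [h])
  · rw [if_neg h]
    exact Fin.cast_val_eq_self x

lemma toNat_cast {y : ℕ} (h1 : 1 ≤ y) (h2 : y ≤ N) : toNat ((y : ℕ) : Fin N) = y := by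
  unfold toNat
  rw [Fin.val_natCast]
  rcases Nat.eq_or_lt_of_le h2 with h | h
  · subst h
    simp
  · rw [Nat.mod_eq_of_lt h]
    have : y ≠ 0 := by omega
    simp [this]

lemma toNat_one' : toNat (1 : Fin N) = 1 := by
  have h : ((1 : ℕ) : Fin N) = (1 : Fin N) := Nat.cast_one
  rw [← h]
  exact toNat_cast le_rfl (Nat.pos_of_ne_zero (NeZero.ne N))

def finOp (N : ℕ) [NeZero N] : Fin N → Fin N → Fin N :=
  fun a b => ((T N (toNat a) (toNat b) : ℕ) : Fin N)

lemma finOp_T_pos (a b : Fin N) : 1 ≤ T N (toNat a) (toNat b) :=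
  T_pos (toNat_pos b)

lemma finOp_T_le (a b : Fin N) : T N (toNat a) (toNat b) ≤ N :=
  T_le (toNat_le b) (toNat_pos b)

lemma finOp_LD (hP : allN N) (a b c : Fin N) :
    finOp N a (finOp N b c) = finOp N (finOp N a b) (finOp N a c) := by
  unfold finOp
  rw [toNat_cast (finOp_T_pos b c) (finOp_T_le b c),
      toNat_cast (finOp_T_pos a b) (finOp_T_le a b),
      toNat_cast (finOp_T_pos a c) (finOp_T_le a c),
      T_LD hP (toNat a) (toNat b) (toNat c) (toNat_pos a) (toNat_le a)
        (toNat_pos b) (toNat_le b) (toNat_pos c)]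

lemma finOp_one (a : Fin N) : finOp N a 1 = a + 1 := by
  unfold finOp
  rw [toNat_one']
  have key : ((T N (toNat a) 1 : ℕ) : Fin N) = ((toNat a + 1 : ℕ) : Fin N) := by
    by_cases h : toNat a < N
    · rw [T_one h]
    · push_neg at h
      have ha : toNat a = N := le_antisymm (toNat_le a) h
      rw [T_top _ h, ha]
      push_cast
      rw [Fin.natCast_self]
      simp
  rw [key]
  push_cast
  rw [cast_toNat]

theorem uniq_aux (op' : Fin N → Fin N → Fin N)
    (hone : ∀ x, op' x 1 = x + 1)
    (hrec : ∀ x y, op' x (y + 1) = op' (op' x y) (x + 1))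
    (hzero : ∀ z, op' 0 z = z) :
    ∀ a b : ℕ, 1 ≤ a → a ≤ N → 1 ≤ b → b ≤ N →
      op' (a : Fin N) (b : Fin N) = ((T N a b : ℕ) : Fin N) := by
  intro a b ha1 haN hb1 hbN
  by_cases hA : N ≤ a
  · have haeq : a = N := by omega
    rw [haeq, Fin.natCast_self, hzero, T_top _ le_rfl]
  · push_neg at hA
    by_cases hb : b = 1
    · subst hb
      rw [Nat.cast_one, hone, T_one hA]
      push_cast
      rfl
    · obtain ⟨b', hbeq⟩ : ∃ b', b = b' + 1 := ⟨b - 1, by omega⟩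
      have hb'1 : 1 ≤ b' := by omega
      have hxb := T_bounds (N := N) (a := a) b' hA hb'1
      have ihin := uniq_aux op' hone hrec hzero a b' ha1 haN hb'1 (by omega)
      have ihout := uniq_aux op' hone hrec hzero (T N a b') (a + 1)
        (by omega) hxb.2 (by omega) (by omega)
      rw [hbeq]
      push_cast
      rw [hrec, ihin]
      have hcast : ((a : Fin N) + 1) = (((a + 1 : ℕ)) : Fin N) := by push_cast; rfl
      rw [hcast, ihout, ← T_succ b' hA hb'1]
      try push_cast
      try rfl
termination_by a b _ _ _ _ => (N - a, b)
decreasing_by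
  · exact Prod.Lex.right _ (by omega)
  · exact Prod.Lex.left _ _ (by omega)

end FinPart

end LaverLD

open LaverLD in
/-- For every natural number `n` there exists exactly one binary
operation `*` on `Fin (2^n)` that is left self-distributive and satisfies
`a * 1 = a + 1 (mod 2^n)` for all `a`. -/
theorem unique_cyclic_LD (n : ℕ) :
    ∃! op : Fin (2^n) → Fin (2^n) → Fin (2^n),
      (∀ a b c, op a (op b c) = op (op a b) (op a c)) ∧
      (∀ a, op a 1 = a + 1) := by
  haveI : NeZero (2 ^ n) := ⟨(Nat.two_pow_pos n).ne'⟩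
  have hP := allN_pow n
  refine ⟨finOp (2 ^ n), ⟨fun a b c => finOp_LD hP a b c, fun a => finOp_one a⟩, ?_⟩
  rintro op' ⟨hLD, hone⟩
  have hrec : ∀ x y : Fin (2 ^ n), op' x (y + 1) = op' (op' x y) (x + 1) := by
    intro x y
    have h := hLD x y 1
    rw [hone y, hone x] at h
    exact h
  have haux : ∀ k : ℕ, op' 0 ((k : Fin (2 ^ n)) + 1) = (k : Fin (2 ^ n)) + 1 := by
    intro k
    induction k with
    | zero => simpa using hone 0
    | succ k ih =>
      have hc : ((k + 1 : ℕ) : Fin (2 ^ n)) = (k : Fin (2 ^ n)) + 1 := by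
        push_cast; rfl
      rw [hc, hrec, ih, zero_add, hone]
  have hzero : ∀ z : Fin (2 ^ n), op' 0 z = z := by
    intro z
    have h1 : (((z - 1).val : ℕ) : Fin (2 ^ n)) = z - 1 := Fin.cast_val_eq_self _
    have h2 : z - 1 + 1 = z := sub_add_cancel z 1
    have h3 := haux (z - 1).val
    rw [h1, h2] at h3
    exact h3
  funext a b
  have e1 := cast_toNat a
  have e2 := cast_toNat b
  calc op' a b
      = op' ((toNat a : ℕ) : Fin (2 ^ n)) ((toNat b : ℕ) : Fin (2 ^ n)) := by
        rw [e1, e2]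
    _ = ((T (2 ^ n) (toNat a) (toNat b) : ℕ) : Fin (2 ^ n)) :=
        uniq_aux op' hone hrec hzero _ _ (toNat_pos a) (toNat_le a)
          (toNat_pos b) (toNat_le b)
    _ = finOp (2 ^ n) a b := rfl
end

section
/- Let n be a natural number and let * be a left self-distributive binary operation on Fin (2^n) with a*1 = a+1 (mod 2^n) for all a. Then for every a there exists k with 0 ≤ k ≤ n such that, writing p = 2^k: (i) a < a*1 < a*2 < ⋯ < a*(p−1) (these inequalities are vacuous when p = 1); (ii) a*(p mod 2^n) = 0; and (iii) a*((p + b) mod 2^n) = a*b for every b. In other words, each row of A_n strictly increases up to the value at p−1, hits 0 at p, and is periodic with period p, a power of 2. -/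
/-- The unique left self-distributive operation on `Fin (2^m)` with `a * 1 = a + 1`. -/
def IsCyclicLD (m : ℕ) (op : Fin (2^m) → Fin (2^m) → Fin (2^m)) : Prop :=
  (∀ a b c, op a (op b c) = op (op a b) (op a c)) ∧ ∀ a, op a 1 = a + 1

open Fin.NatCast

namespace LaverAux


/-- row iterate: `nr n t a b` is row `a` built from partial table `t`. -/
def nr (n : ℕ) (t : ℕ → ℕ → ℕ) (a : ℕ) : ℕ → ℕ
  | 0 => 2^n
  | b+1 => t (nr n t a b) (a+1)

/-- partial tables, built from the top row down -/
def tbl (n : ℕ) : ℕ → ℕ → ℕ → ℕ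
  | 0, _, b => b
  | i+1, a, b => if a = 2^n - (i+1) then nr n (tbl n i) a b else tbl n i a b

/-- the Laver table on `{1,…,2^n}` (row `a`, column `b`); rows `a ≥ 2^n` are the identity. -/
def T (n a b : ℕ) : ℕ := tbl n (2^n - a) a b

lemma tbl_succ (n i a b : ℕ) :
    tbl n (i+1) a b = if a = 2^n - (i+1) then nr n (tbl n i) a b else tbl n i a b := rfl

lemma tbl_agree (n : ℕ) : ∀ j, j ≤ 2^n → ∀ i, i ≤ j → ∀ c, 2^n - i ≤ c → ∀ b,
    tbl n j c b = tbl n i c b := by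
  intro j
  induction j with
  | zero =>
    intro _ i hi c _ b
    interval_cases i
    rfl
  | succ j ih =>
    intro hj i hi c hc b
    rcases eq_or_lt_of_le hi with rfl | hi'
    · rfl
    · have hij : i ≤ j := by omega
      have hcne : c ≠ 2^n - (j+1) := by omega
      rw [tbl_succ, if_neg hcne]
      exact ih (by omega) i hij c (by omega) b

lemma T_top {n c : ℕ} (h : 2^n ≤ c) (b : ℕ) : T n c b = b := by
  unfold T
  rw [Nat.sub_eq_zero_of_le h]
  rfl

lemma T_eq_nr {n a : ℕ} (h : a < 2^n) (b : ℕ) :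
    T n a b = nr n (tbl n (2^n - a - 1)) a b := by
  unfold T
  obtain ⟨i, hi⟩ : ∃ i, 2^n - a = i + 1 := ⟨2^n - a - 1, by omega⟩
  rw [hi, tbl_succ, if_pos (by omega)]
  norm_num

lemma tbl_to_T {n j c : ℕ} (hj : j ≤ 2^n) (hc : 2^n - j ≤ c) (b : ℕ) :
    tbl n j c b = T n c b := by
  have h1 : 2^n - c ≤ j := by omega
  have h2 : 2^n - (2^n - c) ≤ c := by omega
  rw [tbl_agree n j hj (2^n - c) h1 c h2 b]
  rfl

lemma T_zero {n a : ℕ} (h : a < 2^n) : T n a 0 = 2^n := by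
  rw [T_eq_nr h]
  rfl

lemma T_succ_raw {n a b : ℕ} (h : a < 2^n) (hab : a + 1 ≤ T n a b) :
    T n a (b+1) = T n (T n a b) (a+1) := by
  rw [T_eq_nr h]
  show tbl n (2^n - a - 1) (nr n (tbl n (2^n - a - 1)) a b) (a+1) = _
  rw [← T_eq_nr h b]
  exact tbl_to_T (by omega) (by omega) _

lemma T_one {n a : ℕ} (h : a < 2^n) : T n a 1 = a + 1 := by
  have h0 : T n a 0 = 2^n := T_zero h
  rw [show (1:ℕ) = 0 + 1 from rfl, T_succ_raw h (by omega), h0, T_top le_rfl]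

lemma T_bnd {n : ℕ} : ∀ t a, 2^n - a ≤ t → a < 2^n → ∀ b, 1 ≤ b →
    a < T n a b ∧ T n a b ≤ 2^n := by
  intro t
  induction t with
  | zero => intro a h ha; omega
  | succ t ih =>
    intro a hat ha b hb
    obtain ⟨b, rfl⟩ : ∃ b', b = b' + 1 := ⟨b-1, by omega⟩
    clear hb
    induction b with
    | zero => rw [T_one ha]; omega
    | succ b ihb =>
      obtain ⟨h1, h2⟩ := ihb
      rw [T_succ_raw ha (by omega)]
      rcases eq_or_lt_of_le h2 with he | hlt
      · rw [he, T_top le_rfl]; omega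
      · have := ih (T n a (b+1)) (by omega) hlt (a+1) (by omega)
        omega

lemma exists_hit {n a : ℕ} (ha : a < 2^n) : ∃ j, 1 ≤ j ∧ j ≤ 2^n ∧ T n a j = 2^n := by
  by_contra hcon
  push_neg at hcon
  have aux : ∀ b, b + 1 ≤ 2^n → a + 1 + b ≤ T n a (b+1) := by
    intro b
    induction b with
    | zero => intro _; rw [T_one ha]
    | succ b ihb =>
      intro hb
      have h1 := ihb (by omega)
      have hbd := T_bnd (n:=n) (2^n) a (by omega) ha (b+1) (by omega)
      have hne := hcon (b+1) (by omega) (by omega)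
      rw [T_succ_raw ha (by omega)]
      have := T_bnd (n:=n) (2^n) (T n a (b+1)) (by omega) (by omega) (a+1) (by omega)
      omega
  have h2 := aux (2^n - a - 1) (by omega)
  rw [show 2^n - a - 1 + 1 = 2^n - a by omega] at h2
  have hbd := T_bnd (n:=n) (2^n) a (by omega) ha (2^n - a) (by omega)
  exact hcon (2^n - a) (by omega) (by omega) (by omega)

/-- reduce `x ≥ 1` into `[1, m]` modulo `m` -/
def red (m x : ℕ) : ℕ := (x - 1) % m + 1

lemma red_pos {m x : ℕ} : 1 ≤ red m x := by unfold red; omega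

lemma red_le {m x : ℕ} (hm : 1 ≤ m) : red m x ≤ m := by
  have := Nat.mod_lt (x-1) (show 0 < m by omega)
  unfold red; omega

lemma red_modeq {m x : ℕ} (hx : 1 ≤ x) : red m x ≡ x [MOD m] := by
  have h := (Nat.mod_modEq (x-1) m).add_right 1
  unfold red
  rwa [Nat.sub_add_cancel hx] at h

lemma red_eq_iff_dvd {m x : ℕ} (hm : 1 ≤ m) (hx : 1 ≤ x) : red m x = m ↔ m ∣ x := by
  constructor
  · intro h
    have h2 := red_modeq (m := m) hx
    rw [h] at h2
    unfold Nat.ModEq at h2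
    rw [Nat.mod_self] at h2
    exact Nat.dvd_of_mod_eq_zero h2.symm
  · intro h
    have hx0 : x % m = 0 := by obtain ⟨c, rfl⟩ := h; exact Nat.mul_mod_right m c
    have h2 := red_modeq (m := m) hx
    unfold Nat.ModEq at h2
    rw [hx0] at h2
    have h3 := red_le (m := m) (x := x) hm
    have h4 := red_pos (m := m) (x := x)
    rcases eq_or_lt_of_le h3 with h5 | h5
    · exact h5
    · rw [Nat.mod_eq_of_lt h5] at h2; omega

lemma red_eq_self {m x : ℕ} (hx : 1 ≤ x) (hxm : x ≤ m) : red m x = x := by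
  unfold red
  rw [Nat.mod_eq_of_lt (by omega)]
  omega

lemma red_succ {m x : ℕ} (hm : 1 ≤ m) (hx : 1 ≤ x) :
    (red m x = m ∧ red m (x+1) = 1) ∨ (red m x < m ∧ red m (x+1) = red m x + 1) := by
  have hxm : ((x-1) % m + 1) % m = x % m := by
    rw [Nat.mod_add_mod, Nat.sub_add_cancel hx]
  have hlt : (x-1) % m < m := Nat.mod_lt _ (by omega)
  by_cases h : (x-1) % m + 1 = m
  · left
    refine ⟨by unfold red; omega, ?_⟩
    have hx0 : x % m = 0 := by rw [← hxm, h, Nat.mod_self]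
    show x % m + 1 = 1
    omega
  · right
    refine ⟨by unfold red; omega, ?_⟩
    show x % m + 1 = (x-1) % m + 1 + 1
    rw [← hxm, Nat.mod_eq_of_lt (by omega)]
lemma row_basic {n a : ℕ} (ha : a < 2^n) :
    ∃ p, 1 ≤ p ∧ p ≤ 2^n ∧ T n a p = 2^n ∧ (∀ j, 1 ≤ j → j < p → T n a j < 2^n) ∧
      (∀ b, 1 ≤ b → T n a (b + p) = T n a b) ∧
      (∀ i j, 1 ≤ i → i < j → j ≤ p → T n a i < T n a j) := by
  obtain ⟨j0, hj1, hj2, hj3⟩ := exists_hit ha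
  have hP : ∃ t, T n a (t+1) = 2^n := ⟨j0 - 1, by rwa [Nat.sub_add_cancel hj1]⟩
  set p := Nat.find hP + 1 with hpdef
  have hhit : T n a p = 2^n := Nat.find_spec hP
  have hple : p ≤ 2^n := by
    have : Nat.find hP ≤ j0 - 1 := Nat.find_min' hP (by rwa [Nat.sub_add_cancel hj1])
    omega
  have hbef : ∀ j, 1 ≤ j → j < p → T n a j < 2^n := by
    intro j h1 h2
    have hne : T n a j ≠ 2^n := by
      have := Nat.find_min hP (m := j - 1) (by omega)
      rwa [Nat.sub_add_cancel h1] at this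
    have := T_bnd (n:=n) (2^n) a (by omega) ha j h1
    omega
  have hper : ∀ b, 1 ≤ b → T n a (b + p) = T n a b := by
    intro b hb
    obtain ⟨b, rfl⟩ : ∃ b', b = b'+1 := ⟨b-1, by omega⟩
    clear hb
    induction b with
    | zero =>
      rw [show 1 + p = p + 1 by omega, T_succ_raw ha (by rw [hhit]; omega), hhit,
        T_top le_rfl, T_one ha]
    | succ b ihb =>
      have hbd := T_bnd (n:=n) (2^n) a (by omega) ha (b+1+p) (by omega)
      rw [show b+1+1+p = (b+1+p)+1 by omega, T_succ_raw ha (by omega), ihb,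
        ← T_succ_raw ha (by have := T_bnd (n:=n) (2^n) a (by omega) ha (b+1) (by omega); omega)]
  have hmono : ∀ i j, 1 ≤ i → i < j → j ≤ p → T n a i < T n a j := by
    intro i j h1 h2 h3
    obtain ⟨d, rfl⟩ : ∃ d, j = i + (d+1) := ⟨j - i - 1, by omega⟩
    clear h2
    revert h3
    induction d with
    | zero =>
      intro h3
      have hlt : T n a i < 2^n := hbef i h1 (by omega)
      have hb1 := T_bnd (n:=n) (2^n) a (by omega) ha i h1
      rw [show i + 1 = i + 1 from rfl, T_succ_raw ha (by omega)]
      exact (T_bnd (n:=n) (2^n) (T n a i) (by omega) hlt (a+1) (by omega)).1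
    | succ d ihd =>
      intro h3
      have step1 : T n a i < T n a (i + (d+1)) := ihd (by omega)
      have hlt : T n a (i+(d+1)) < 2^n := hbef _ (by omega) (by omega)
      have hb1 := T_bnd (n:=n) (2^n) a (by omega) ha (i+(d+1)) (by omega)
      rw [show i + (d+1+1) = (i + (d+1)) + 1 by omega, T_succ_raw ha (by omega)]
      have := (T_bnd (n:=n) (2^n) (T n a (i+(d+1))) (by omega) hlt (a+1) (by omega)).1
      omega
  exact ⟨p, by omega, hple, hhit, hbef, hper, hmono⟩

lemma T_per_mul {n a p : ℕ} (M3 : ∀ b, 1 ≤ b → T n a (b + p) = T n a b) :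
    ∀ s b, 1 ≤ b → T n a (b + s * p) = T n a b := by
  intro s
  induction s with
  | zero => intro b _; simp
  | succ s ih =>
    intro b hb
    rw [show b + (s+1) * p = (b + s * p) + p by ring, M3 _ (by omega), ih b hb]

lemma T_cong {n a p : ℕ} (M3 : ∀ b, 1 ≤ b → T n a (b + p) = T n a b) :
    ∀ y y', 1 ≤ y → 1 ≤ y' → y ≡ y' [MOD p] → T n a y = T n a y' := by
  have main : ∀ y y', 1 ≤ y → y ≤ y' → y ≡ y' [MOD p] → T n a y = T n a y' := by
    intro y y' hy hle h
    obtain ⟨d, hdd⟩ := (Nat.modEq_iff_dvd' hle).mp h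
    have hy' : y' = y + d * p := by rw [mul_comm]; omega
    rw [hy']
    exact (T_per_mul M3 d y hy).symm
  intro y y' hy hy' h
  rcases le_total y y' with hle | hle
  · exact main y y' hy hle h
  · exact (main y' y hy' hle h.symm).symm

lemma T_hit_mul {n a p : ℕ} (hp : 1 ≤ p) (M2 : T n a p = 2^n)
    (M3 : ∀ b, 1 ≤ b → T n a (b + p) = T n a b) :
    ∀ s, 1 ≤ s → T n a (s * p) = 2^n := by
  intro s hs
  obtain ⟨s, rfl⟩ : ∃ s', s = s' + 1 := ⟨s-1, by omega⟩
  rw [show (s+1) * p = p + s * p by ring, T_per_mul M3 s p hp, M2]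

lemma row_top_iff {n a k : ℕ} (M1 : ∀ j, 1 ≤ j → j < 2^k → T n a j < 2^n)
    (M2 : T n a (2^k) = 2^n) (M3 : ∀ b, 1 ≤ b → T n a (b + 2^k) = T n a b) :
    ∀ y, 1 ≤ y → (T n a y = 2^n ↔ 2^k ∣ y) := by
  have hp : (1:ℕ) ≤ 2^k := Nat.one_le_two_pow
  intro y hy
  constructor
  · intro h
    have hcong : T n a y = T n a (red (2^k) y) :=
      T_cong M3 y _ hy red_pos (red_modeq hy).symm
    have h4 := red_le (m := 2^k) (x := y) hp
    rcases eq_or_lt_of_le h4 with h5 | h5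
    · exact (red_eq_iff_dvd hp hy).mp h5
    · have := M1 _ (red_pos (m := 2^k) (x := y)) h5
      omega
  · intro h
    obtain ⟨s, rfl⟩ := h
    have hs : 1 ≤ s := by
      rcases Nat.eq_zero_or_pos s with rfl | h'
      · omega
      · exact h'
    rw [mul_comm]
    exact T_hit_mul hp M2 M3 s hs

lemma T_hit_pow {n a k : ℕ} (hk : k ≤ n) (M2 : T n a (2^k) = 2^n)
    (M3 : ∀ b, 1 ≤ b → T n a (b + 2^k) = T n a b) : T n a (2^n) = 2^n := by
  obtain ⟨s, hs⟩ : (2:ℕ)^k ∣ 2^n := pow_dvd_pow 2 hk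
  have hs1 : 1 ≤ s := by
    rcases Nat.eq_zero_or_pos s with rfl | h'
    · have := Nat.one_le_two_pow (n := n); omega
    · exact h'
  conv_lhs => rw [hs]
  rw [mul_comm]
  exact T_hit_mul Nat.one_le_two_pow M2 M3 s hs1

/-- statement of the main structural theorem for the table `T n` -/
def Main (n : ℕ) : Prop := ∀ a, 1 ≤ a → a < 2^n →
  ∃ k, k ≤ n ∧ (∀ j, 1 ≤ j → j < 2^k → T n a j < 2^n) ∧ T n a (2^k) = 2^n ∧
    ∀ b, 1 ≤ b → T n a (b + 2^k) = T n a b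

lemma per' {n : ℕ} (H : Main n) : ∀ x, 1 ≤ x → x ≤ 2^n → T n x (2^n) = 2^n := by
  intro x h1 h2
  rcases eq_or_lt_of_le h2 with rfl | hlt
  · exact T_top le_rfl _
  · obtain ⟨k, hk, M1, M2, M3⟩ := H x h1 hlt
    obtain ⟨s, hs⟩ : 2^k ∣ 2^n := pow_dvd_pow 2 hk
    have hs1 : 1 ≤ s := by
      rcases Nat.eq_zero_or_pos s with rfl | h'
      · have := Nat.one_le_two_pow (n := n); omega
      · exact h'
    conv_lhs => rw [hs]
    rw [mul_comm]
    exact T_hit_mul Nat.one_le_two_pow M2 M3 s hs1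
lemma two_pow_succ' (n : ℕ) : 2^(n+1) = 2^n * 2 := by rw [pow_succ]

lemma red_top2 {n : ℕ} : red (2^n) (2^(n+1)) = 2^n :=
  (red_eq_iff_dvd Nat.one_le_two_pow Nat.one_le_two_pow).mpr ⟨2, two_pow_succ' n⟩

lemma red_self {m : ℕ} (hm : 1 ≤ m) : red m m = m :=
  (red_eq_iff_dvd hm hm).mpr dvd_rfl

lemma red_mem_cases {n x : ℕ} (h1 : 1 ≤ x) (h2 : x ≤ 2^(n+1)) :
    red (2^n) x = 2^n ↔ (x = 2^n ∨ x = 2^(n+1)) := by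
  have hpos : (0:ℕ) < 2^n := Nat.two_pow_pos n
  constructor
  · intro h
    obtain ⟨s, rfl⟩ := (red_eq_iff_dvd Nat.one_le_two_pow h1).mp h
    have hs1 : 1 ≤ s := by
      rcases Nat.eq_zero_or_pos s with rfl | h'
      · omega
      · exact h'
    have hs2 : s ≤ 2 := by
      rw [two_pow_succ' n] at h2
      exact Nat.le_of_mul_le_mul_left h2 hpos
    interval_cases s
    · left; rw [mul_one]
    · right; rw [two_pow_succ' n]
  · rintro (rfl | rfl)
    · exact red_self Nat.one_le_two_pow
    · exact red_top2

lemma hom (n : ℕ) (hper : ∀ x, 1 ≤ x → x ≤ 2^n → T n x (2^n) = 2^n) :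
    ∀ t a, 2^(n+1) - a ≤ t → 1 ≤ a → a ≤ 2^(n+1) → ∀ b, 1 ≤ b →
      red (2^n) (T (n+1) a b) = T n (red (2^n) a) (red (2^n) b) := by
  have hN1 : (1:ℕ) ≤ 2^n := Nat.one_le_two_pow
  have top_case : ∀ b, 1 ≤ b →
      red (2^n) (T (n+1) (2^(n+1)) b) = T n (red (2^n) (2^(n+1))) (red (2^n) b) := by
    intro b _
    rw [T_top le_rfl, red_top2, T_top le_rfl]
  intro t
  induction t with
  | zero =>
    intro a h h1 h2 b hb
    have ha : a = 2^(n+1) := by omega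
    subst ha
    exact top_case b hb
  | succ t ih =>
    intro a hat h1 h2 b hb
    rcases eq_or_lt_of_le h2 with rfl | haN
    · exact top_case b hb
    · obtain ⟨w, rfl⟩ : ∃ w, b = w + 1 := ⟨b-1, by omega⟩
      clear hb
      induction w with
      | zero =>
        rw [show red (2^n) 1 = 1 from red_eq_self le_rfl hN1, T_one haN]
        rcases red_succ (m := 2^n) hN1 h1 with ⟨hpa, hnext⟩ | ⟨hpa, hnext⟩
        · rw [hnext, hpa, T_top le_rfl]
        · rw [hnext, T_one hpa]
      | succ w ihw =>
        have hcb := T_bnd (n:=n+1) (2^(n+1)) a (by omega) haN (w+1) (by omega)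
        have hstep : T (n+1) a (w+2) = T (n+1) (T (n+1) a (w+1)) (a+1) :=
          T_succ_raw haN (by omega)
        have houter : red (2^n) (T (n+1) (T (n+1) a (w+1)) (a+1))
            = T n (red (2^n) (T (n+1) a (w+1))) (red (2^n) (a+1)) :=
          ih (T (n+1) a (w+1)) (by omega) (by omega) (by omega) (a+1) (by omega)
        rw [hstep, houter, ihw]
        rcases red_succ (m := 2^n) hN1 (show 1 ≤ w+1 by omega) with ⟨hb1, hb2⟩ | ⟨hb1, hb2⟩
        · rw [hb1, hb2]
          rw [hper (red (2^n) a) red_pos (red_le hN1), T_top le_rfl]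
          rcases red_succ (m := 2^n) hN1 h1 with ⟨hA1, hA2⟩ | ⟨hA1, hA2⟩
          · rw [hA2, hA1, T_top le_rfl]
          · rw [hA2, T_one hA1]
        · rw [hb2]
          rcases red_succ (m := 2^n) hN1 h1 with ⟨hA1, hA2⟩ | ⟨hA1, hA2⟩
          · rw [hA1, hA2, T_top le_rfl, T_top le_rfl, T_one hb1]
          · rw [hA2]
            have hbnd := T_bnd (n:=n) (2^n) (red (2^n) a) (by omega) hA1
              (red (2^n) (w+1)) red_pos
            rw [T_succ_raw hA1 (by omega)]

theorem main_T : ∀ n, Main n := by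
  intro n
  induction n with
  | zero => intro a h1 h2; omega
  | succ n ihn =>
    intro a h1 h2
    have h2pow : 2^(n+1) = 2^n * 2 := two_pow_succ' n
    have hN1 : (1:ℕ) ≤ 2^n := Nat.one_le_two_pow
    obtain ⟨p, hp1, hpN, hhit, hbef, hper, hmono⟩ := row_basic h2
    have hhom := hom n (per' ihn) (2^(n+1))
    obtain ⟨k', hk'n, hp'dvd, hX⟩ :
        ∃ k', k' ≤ n ∧ (2^k' ∣ 2^n) ∧ ∀ b, 1 ≤ b →
          ((T (n+1) a b = 2^n ∨ T (n+1) a b = 2^(n+1)) ↔ 2^k' ∣ b) := by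
      have hpa_le := red_le (m := 2^n) (x := a) hN1
      rcases eq_or_lt_of_le hpa_le with hEq | hLt
      · refine ⟨n, le_rfl, dvd_rfl, ?_⟩
        intro b hb
        have hhb := hhom a (by omega) h1 (by omega) b hb
        rw [hEq, T_top le_rfl] at hhb
        have hTb := T_bnd (n:=n+1) (2^(n+1)) a (by omega) h2 b hb
        constructor
        · intro h
          have hh : red (2^n) (T (n+1) a b) = 2^n :=
            (red_mem_cases (by omega) (by omega)).mpr h
          rw [hhb] at hh
          exact (red_eq_iff_dvd hN1 hb).mp hh
        · intro hdvd
          have hh : red (2^n) b = 2^n := (red_eq_iff_dvd hN1 hb).mpr hdvd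
          rw [← hhb] at hh
          exact (red_mem_cases (by omega) (by omega)).mp hh
      · obtain ⟨k', hk', M1', M2', M3'⟩ := ihn (red (2^n) a) red_pos hLt
        refine ⟨k', hk', pow_dvd_pow 2 hk', ?_⟩
        have hiff := row_top_iff M1' M2' M3'
        intro b hb
        have hhb := hhom a (by omega) h1 (by omega) b hb
        have hTb := T_bnd (n:=n+1) (2^(n+1)) a (by omega) h2 b hb
        have hbmod : red (2^n) b ≡ b [MOD 2^k'] :=
          (red_modeq hb).of_dvd (pow_dvd_pow 2 hk')
        constructor
        · intro h
          have hh : red (2^n) (T (n+1) a b) = 2^n :=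
            (red_mem_cases (by omega) (by omega)).mpr h
          rw [hhb] at hh
          have hdvd' : 2^k' ∣ red (2^n) b := (hiff _ red_pos).mp hh
          have : (0:ℕ) ≡ b [MOD 2^k'] :=
            (Nat.modEq_zero_iff_dvd.mpr hdvd').symm.trans hbmod
          exact Nat.modEq_zero_iff_dvd.mp this.symm
        · intro hdvd
          have hdvd' : 2^k' ∣ red (2^n) b := by
            have : red (2^n) b ≡ 0 [MOD 2^k'] :=
              hbmod.trans (Nat.modEq_zero_iff_dvd.mpr hdvd)
            exact Nat.modEq_zero_iff_dvd.mp this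
          have hh : T n (red (2^n) a) (red (2^n) b) = 2^n := (hiff _ red_pos).mpr hdvd'
          rw [← hhb] at hh
          exact (red_mem_cases (by omega) (by omega)).mp hh
    have hp'p : 2^k' ∣ p := (hX p hp1).mp (Or.inr hhit)
    have hkpos : (1:ℕ) ≤ 2^k' := Nat.one_le_two_pow
    have hple2 : p ≤ 2 * 2^k' := by
      by_contra hgt
      push_neg at hgt
      have h1' := (hX (2^k') hkpos).mpr dvd_rfl
      have h2' := (hX (2*2^k') (by omega)).mpr ⟨2, by ring⟩
      have hm1 : T (n+1) a (2^k') < T (n+1) a (2*2^k') :=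
        hmono _ _ hkpos (by omega) (by omega)
      have hm2 : T (n+1) a (2*2^k') < T (n+1) a p := hmono _ _ (by omega) hgt le_rfl
      rw [hhit] at hm2
      omega
    obtain ⟨d, hd⟩ := hp'p
    have hd12 : d = 1 ∨ d = 2 := by
      have hd1 : 1 ≤ d := by
        rcases Nat.eq_zero_or_pos d with rfl | h'
        · omega
        · exact h'
      have hd2 : d ≤ 2 := by
        rw [hd] at hple2
        have h' : 2^k' * d ≤ 2^k' * 2 := by linarith
        exact Nat.le_of_mul_le_mul_left h' (by omega)
      omega
    rcases hd12 with rfl | rfl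
    · rw [mul_one] at hd
      subst hd
      exact ⟨k', by omega, hbef, hhit, hper⟩
    · have hd' : p = 2^(k'+1) := by rw [hd, pow_succ]
      subst hd'
      exact ⟨k'+1, by omega, hbef, hhit, hper⟩
section FinSide

variable {n : ℕ}

/-- value map `Fin (2^n) → {1,…,2^n}` sending `0` to `2^n`. -/
def v (n : ℕ) (x : Fin (2^n)) : ℕ := if x.val = 0 then 2^n else x.val

lemma v_pos {x : Fin (2^n)} : 1 ≤ v n x := by
  have := Nat.one_le_two_pow (n := n)
  unfold v; split <;> omega

lemma v_le {x : Fin (2^n)} : v n x ≤ 2^n := by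
  have := x.isLt
  unfold v; split <;> omega

lemma v_zero : v n (0 : Fin (2^n)) = 2^n := by unfold v; simp

lemma v_eq_top {x : Fin (2^n)} (h : v n x = 2^n) : x = 0 := by
  unfold v at h
  by_cases hx : x.val = 0
  · exact Fin.ext (by simp [hx])
  · rw [if_neg hx] at h
    have := x.isLt
    omega

lemma v_val {x : Fin (2^n)} (h : v n x < 2^n) : x.val = v n x := by
  unfold v at h ⊢
  by_cases hx : x.val = 0
  · rw [if_pos hx] at h; omega
  · rw [if_neg hx]

lemma v_of_ne {x : Fin (2^n)} (h : x.val ≠ 0) : v n x = x.val := by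
  unfold v; rw [if_neg h]

lemma v_inj {x y : Fin (2^n)} (h : v n x = v n y) : x = y := by
  by_cases hx : v n x = 2^n
  · rw [v_eq_top hx, v_eq_top (by omega : v n y = 2^n)]
  · have h1 : v n x < 2^n := lt_of_le_of_ne v_le hx
    exact Fin.ext (by rw [v_val h1, v_val (by omega)]; exact h)

lemma v_cast {w : ℕ} (hw : 1 ≤ w) : v n ((w : ℕ) : Fin (2^n)) = red (2^n) w := by
  have hN1 : (1:ℕ) ≤ 2^n := Nat.one_le_two_pow
  unfold v
  rw [Fin.val_natCast]
  by_cases h : 2^n ∣ w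
  · rw [if_pos (by obtain ⟨c, rfl⟩ := h; exact Nat.mul_mod_right _ _)]
    exact ((red_eq_iff_dvd hN1 hw).mpr h).symm
  · have h1 : w % 2^n ≠ 0 := fun hc => h (Nat.dvd_of_mod_eq_zero hc)
    rw [if_neg h1]
    have h2 := red_modeq (m := 2^n) hw
    have h3 : red (2^n) w < 2^n :=
      lt_of_le_of_ne (red_le hN1) (fun hc => h ((red_eq_iff_dvd hN1 hw).mp hc))
    unfold Nat.ModEq at h2
    rw [Nat.mod_eq_of_lt h3] at h2
    omega

variable (op : Fin (2^n) → Fin (2^n) → Fin (2^n))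

lemma op_succ (hop : IsCyclicLD n op) : ∀ x y : Fin (2^n), op x (y + 1) = op (op x y) (x + 1) := by
  intro x y
  rw [← hop.2 y, hop.1 x y 1, hop.2 x]

lemma row_zero (hop : IsCyclicLD n op) : ∀ w : ℕ, 1 ≤ w → op 0 ((w : ℕ) : Fin (2^n)) = ((w : ℕ) : Fin (2^n)) := by
  intro w hw
  obtain ⟨w, rfl⟩ : ∃ w', w = w' + 1 := ⟨w-1, by omega⟩
  clear hw
  induction w with
  | zero =>
    rw [Nat.cast_one, hop.2 0, zero_add]
  | succ w ih =>
    have hc : ((w+1+1 : ℕ) : Fin (2^n)) = ((w+1 : ℕ) : Fin (2^n)) + 1 := by push_cast; ring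
    rw [hc, op_succ op hop, ih, zero_add, hop.2]

lemma key (hop : IsCyclicLD n op) : ∀ t (a : Fin (2^n)), 2^n - v n a ≤ t → ∀ w, 1 ≤ w →
    v n (op a ((w : ℕ) : Fin (2^n))) = T n (v n a) (red (2^n) w) := by
  have hN1 : (1:ℕ) ≤ 2^n := Nat.one_le_two_pow
  have zero_case : ∀ w, 1 ≤ w →
      v n (op 0 ((w : ℕ) : Fin (2^n))) = T n (v n (0 : Fin (2^n))) (red (2^n) w) := by
    intro w hw
    rw [row_zero op hop w hw, v_cast hw, v_zero, T_top le_rfl]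
  intro t
  induction t with
  | zero =>
    intro a ha w hw
    have h1 : v n a = 2^n := by have := v_le (x := a); omega
    rw [v_eq_top h1]
    exact zero_case w hw
  | succ t ih =>
    intro a ha w hw
    by_cases h0 : a = 0
    · subst h0; exact zero_case w hw
    · have hval0 : a.val ≠ 0 := fun h => h0 (Fin.ext (by simpa using h))
      have hm : v n a = a.val := by unfold v; rw [if_neg hval0]
      have hm1 : 1 ≤ a.val := by omega
      have hmN : a.val < 2^n := a.isLt
      have hN2 : 2 ≤ 2^n := by omega
      obtain ⟨k, hk, M1, M2, M3⟩ := main_T n a.val hm1 hmN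
      have hcong : ∀ y y', 1 ≤ y → 1 ≤ y' → y ≡ y' [MOD 2^n] → T n a.val y = T n a.val y' := by
        intro y y' hy hy' hyy
        exact T_cong M3 y y' hy hy' (hyy.of_dvd (pow_dvd_pow 2 hk))
      have aux : ∀ u, v n (op a ((u+1 : ℕ) : Fin (2^n))) = T n a.val (u % 2^n + 1) := by
        intro u
        induction u with
        | zero =>
          rw [Nat.cast_one, hop.2 a, Nat.zero_mod, T_one hmN]
          have hone : (1 : Fin (2^n)).val = 1 := by
            rw [Fin.val_one']
            exact Nat.mod_eq_of_lt hN2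
          have hval : (a+1).val = (a.val + 1) % 2^n := by
            rw [Fin.add_def, hone]
          unfold v
          rw [hval]
          rcases eq_or_lt_of_le (show a.val + 1 ≤ 2^n by omega) with he | hlt
          · rw [he, Nat.mod_self, if_pos rfl]
          · rw [Nat.mod_eq_of_lt hlt, if_neg (by omega)]
        | succ u ihu =>
          have hcast : ((u+2 : ℕ) : Fin (2^n)) = ((u+1 : ℕ) : Fin (2^n)) + 1 := by
            rw [show u+2 = (u+1)+1 from rfl, Nat.cast_succ]
          rw [hcast, op_succ op hop]
          have hbnd := T_bnd (n:=n) (2^n) a.val (by omega) hmN (u % 2^n + 1) (by omega)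
          have ha1 : a + 1 = ((a.val + 1 : ℕ) : Fin (2^n)) := by
            push_cast
            rfl
          rw [ha1]
          have houter := ih (op a ((u+1 : ℕ) : Fin (2^n)))
            (by rw [ihu]; omega) (a.val + 1) (by omega)
          rw [houter, ihu]
          have hred : red (2^n) (a.val + 1) = a.val + 1 := red_eq_self (by omega) (by omega)
          rw [hred]
          have hbnd2 := T_bnd (n:=n) (2^n) a.val (by omega) hmN (u+1) (by omega)
          have e1 : T n a.val ((u+1) % 2^n + 1) = T n a.val (u+2) :=
            hcong _ _ (by omega) (by omega)
              (((Nat.mod_modEq (u+1) (2^n)).add_right 1))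
          have e2 : T n a.val (u+2) = T n (T n a.val (u+1)) (a.val+1) :=
            T_succ_raw hmN (by omega)
          have e3 : T n a.val (u+1) = T n a.val (u % 2^n + 1) :=
            hcong _ _ (by omega) (by omega)
              (((Nat.mod_modEq u (2^n)).add_right 1)).symm
          rw [e1, e2, e3]
      have := aux (w - 1)
      rw [Nat.sub_add_cancel hw] at this
      rw [hm]
      exact this

end FinSide

end LaverAux

open LaverAux in
/-- in `A_n`, every row strictly increases up to its value at `p - 1`
(where `p = 2^k` for some `k ≤ n`), hits `0` at `p`, and is periodic with period `p`. -/
theorem row_structure (n : ℕ) (op : Fin (2^n) → Fin (2^n) → Fin (2^n))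
    (hop : IsCyclicLD n op) (a : Fin (2^n)) :
    ∃ k ≤ n,
      -- (i)  a < a*1 < a*2 < ⋯ < a*(2^k − 1)
      ((1 < 2^k → a < op a 1) ∧
        (∀ i : ℕ, 1 ≤ i → i + 1 < 2^k →
          op a ((i : ℕ) : Fin (2^n)) < op a ((i + 1 : ℕ) : Fin (2^n)))) ∧
      -- (ii)  a*(2^k mod 2^n) = 0
      op a ((2^k : ℕ) : Fin (2^n)) = 0 ∧
      -- (iii) a*((2^k + b) mod 2^n) = a*b for every b
      (∀ b : ℕ, op a ((2^k + b : ℕ) : Fin (2^n)) = op a ((b : ℕ) : Fin (2^n))) := by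
  have hN1 : (1:ℕ) ≤ 2^n := Nat.one_le_two_pow
  by_cases h0 : a = 0
  · subst h0
    refine ⟨n, le_rfl, ⟨?_, ?_⟩, ?_, ?_⟩
    · intro h1
      rw [hop.2 0, zero_add, Fin.lt_def]
      have hone : (1 : Fin (2^n)).val = 1 := by
        rw [Fin.val_one']; exact Nat.mod_eq_of_lt h1
      rw [hone]
      simp
    · intro i hi hi1
      rw [row_zero op hop i hi, row_zero op hop (i+1) (by omega)]
      rw [Fin.lt_def, Fin.val_natCast, Fin.val_natCast,
        Nat.mod_eq_of_lt (by omega : i < 2^n), Nat.mod_eq_of_lt hi1]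
      omega
    · rw [row_zero op hop (2^n) hN1]
      exact Fin.natCast_self _
    · intro b
      rcases Nat.eq_zero_or_pos b with rfl | hb
      · have : ((2^n + 0 : ℕ) : Fin (2^n)) = ((0 : ℕ) : Fin (2^n)) := by
          simp [Fin.natCast_self]
        rw [this]
      · rw [row_zero op hop _ (by omega : 1 ≤ 2^n + b), row_zero op hop b hb]
        rw [Nat.cast_add, Fin.natCast_self, zero_add]
  · have hval0 : a.val ≠ 0 := fun h => h0 (Fin.ext (by simpa using h))
    have hm1 : 1 ≤ a.val := by omega
    have hmN : a.val < 2^n := a.isLt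
    have hN2 : 2 ≤ 2^n := by omega
    obtain ⟨k, hk, M1, M2, M3⟩ := main_T n a.val hm1 hmN
    have hm : v n a = a.val := v_of_ne hval0
    have hkey : ∀ w, 1 ≤ w → v n (op a ((w : ℕ) : Fin (2^n))) = T n a.val (red (2^n) w) := by
      intro w hw
      have := key op hop (2^n) a (by omega) w hw
      rwa [hm] at this
    have hpk : 2^k ≤ 2^n := Nat.pow_le_pow_right (by norm_num) hk
    have hppos : (1:ℕ) ≤ 2^k := Nat.one_le_two_pow
    have hcong : ∀ y y', 1 ≤ y → 1 ≤ y' → y ≡ y' [MOD 2^k] → T n a.val y = T n a.val y' :=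
      fun y y' hy hy' hyy => T_cong M3 y y' hy hy' hyy
    refine ⟨k, hk, ⟨?_, ?_⟩, ?_, ?_⟩
    · intro hp1
      have hT1 : T n a.val 1 = a.val + 1 := T_one hmN
      have hlt : T n a.val 1 < 2^n := M1 1 le_rfl hp1
      rw [hop.2 a, Fin.lt_def]
      have hone : (1 : Fin (2^n)).val = 1 := by
        rw [Fin.val_one']; exact Nat.mod_eq_of_lt hN2
      have hv : (a+1).val = (a.val + 1) % 2^n := by rw [Fin.add_def, hone]
      rw [hv, Nat.mod_eq_of_lt (by omega)]
      omega
    · intro i hi hi1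
      have hiN : i + 1 < 2^n := by omega
      have e1 := hkey i hi
      have e2 := hkey (i+1) (by omega)
      rw [red_eq_self hi (by omega)] at e1
      rw [red_eq_self (by omega) (by omega)] at e2
      have hlt1 : T n a.val i < 2^n := M1 i hi (by omega)
      have hlt2 : T n a.val (i+1) < 2^n := M1 (i+1) (by omega) hi1
      have hb1 := T_bnd (n:=n) (2^n) a.val (by omega) hmN i hi
      have hmn : T n a.val i < T n a.val (i+1) := by
        rw [T_succ_raw hmN (by omega)]
        exact (T_bnd (n:=n) (2^n) (T n a.val i) (by omega) hlt1 (a.val+1) (by omega)).1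
      have hv1 : (op a ((i : ℕ) : Fin (2^n))).val = v n (op a ((i : ℕ) : Fin (2^n))) :=
        v_val (by rw [e1]; exact hlt1)
      have hv2 : (op a ((i+1 : ℕ) : Fin (2^n))).val = v n (op a ((i+1 : ℕ) : Fin (2^n))) :=
        v_val (by rw [e2]; exact hlt2)
      rw [Fin.lt_def, hv1, hv2, e1, e2]
      exact hmn
    · have e := hkey (2^k) hppos
      rw [red_eq_self hppos hpk, M2] at e
      exact v_eq_top e
    · intro b
      rcases Nat.eq_zero_or_pos b with rfl | hb
      · have e1 := hkey (2^k) hppos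
        rw [red_eq_self hppos hpk, M2] at e1
        have e2 := hkey (2^n) hN1
        rw [red_self hN1] at e2
        have hTN : T n a.val (2^n) = 2^n := T_hit_pow hk M2 M3
        rw [hTN] at e2
        have hz1 : op a ((2^k + 0 : ℕ) : Fin (2^n)) = 0 := by
          rw [Nat.add_zero]; exact v_eq_top e1
        have hz2 : op a ((0 : ℕ) : Fin (2^n)) = 0 := by
          have hcast : ((0 : ℕ) : Fin (2^n)) = ((2^n : ℕ) : Fin (2^n)) := by
            simp [Fin.natCast_self]
          rw [hcast]; exact v_eq_top e2
        rw [hz1, hz2]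
      · have e1 := hkey (2^k + b) (by omega)
        have e2 := hkey b hb
        have hzero : (2:ℕ)^k ≡ 0 [MOD 2^k] := Nat.modEq_zero_iff_dvd.mpr dvd_rfl
        have hmod : red (2^n) (2^k + b) ≡ red (2^n) b [MOD 2^k] := by
          have h1 : red (2^n) (2^k+b) ≡ 2^k + b [MOD 2^k] :=
            (red_modeq (by omega)).of_dvd (pow_dvd_pow 2 hk)
          have h2 : red (2^n) b ≡ b [MOD 2^k] :=
            (red_modeq hb).of_dvd (pow_dvd_pow 2 hk)
          calc red (2^n) (2^k+b) ≡ 2^k + b [MOD 2^k] := h1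
            _ ≡ 0 + b [MOD 2^k] := hzero.add_right b
            _ = b := zero_add b
            _ ≡ red (2^n) b [MOD 2^k] := h2.symm
        have heq : T n a.val (red (2^n) (2^k+b)) = T n a.val (red (2^n) b) :=
          hcong _ _ red_pos red_pos hmod
        exact v_inj (by rw [e1, e2, heq])
end

section
/- In the cyclic left-distributive algebra A_n (n ≥ 1): p_n(0) = 2^n, p_n(2^n − 1) = 1, p_n(2^{n−1}) = 2^{n−1}, and for every a with 0 < a < 2^n − 1 one has 1 < p_n(a) < 2^n. -/
open Fin.NatCast

/-- The period `p_m(a)`: the least positive `p` with `a * (p mod 2^m) = 0`. -/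
noncomputable def period (m : ℕ) (op : Fin (2^m) → Fin (2^m) → Fin (2^m))
    (a : Fin (2^m)) : ℕ :=
  sInf {p : ℕ | 0 < p ∧ op a ((p : ℕ) : Fin (2^m)) = 0}

namespace CLDAux

variable {N : ℕ} [NeZero N] {op : Fin N → Fin N → Fin N}

theorem cast_succ (k : ℕ) : ((k+1 : ℕ) : Fin N) = (k : Fin N) + 1 := by push_cast; ring

theorem myrec (hld : ∀ a b c, op a (op b c) = op (op a b) (op a c))
    (hs : ∀ a, op a 1 = a + 1) (a b : Fin N) :
    op a (b + 1) = op (op a b) (a + 1) := by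
  conv_lhs => rw [← hs b]
  rw [hld, hs]

theorem recN (hld : ∀ a b c, op a (op b c) = op (op a b) (op a c))
    (hs : ∀ a, op a 1 = a + 1) (a : Fin N) (k : ℕ) :
    op a ↑(k+1) = op (op a ↑k) (a+1) := by
  rw [cast_succ, myrec hld hs]

theorem row0 (hld : ∀ a b c, op a (op b c) = op (op a b) (op a c))
    (hs : ∀ a, op a 1 = a + 1) : ∀ k : ℕ, 1 ≤ k → op 0 (↑k) = (↑k : Fin N) := by
  intro k hk
  induction k with
  | zero => omega
  | succ m ih =>
    rcases Nat.eq_or_lt_of_le hk with h | h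
    · have : m = 0 := by omega
      subst this
      simpa using hs 0
    · have hm : 1 ≤ m := by omega
      rw [recN hld hs, ih hm, zero_add, hs, cast_succ]

theorem row0zero (hld : ∀ a b c, op a (op b c) = op (op a b) (op a c))
    (hs : ∀ a, op a 1 = a + 1) : op (0 : Fin N) 0 = 0 := by
  have hN : 1 ≤ N := Nat.pos_of_ne_zero (NeZero.ne N)
  have h := row0 hld hs N hN
  rwa [Fin.natCast_self] at h

theorem row0' (hld : ∀ a b c, op a (op b c) = op (op a b) (op a c))
    (hs : ∀ a, op a 1 = a + 1) (b : Fin N) : op 0 b = b := by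
  rcases Nat.eq_zero_or_pos b.val with h | h
  · have : b = 0 := by ext; simpa using h
    rw [this]; exact row0zero hld hs
  · have := row0 hld hs b.val h
    rwa [Fin.cast_val_eq_self] at this

theorem add_one_cases (a : Fin N) (h2 : 2 ≤ N) : a + 1 = 0 ∨ a.val < (a+1).val := by
  have hv : (a + 1).val = (a.val + 1) % N := by
    rw [Fin.val_add, Fin.val_one']
    rw [Nat.mod_eq_of_lt h2]
  rcases Nat.lt_or_ge (a.val + 1) N with h | h
  · right
    rw [hv, Nat.mod_eq_of_lt h]
    omega
  · left
    have : a.val + 1 = N := by have := a.isLt; omega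
    ext
    rw [hv, this, Nat.mod_self]
    rfl

theorem L1 (hld : ∀ a b c, op a (op b c) = op (op a b) (op a c))
    (hs : ∀ a, op a 1 = a + 1) :
    ∀ d : ℕ, ∀ a : Fin N, N ≤ a.val + d → 1 ≤ a.val →
      ∀ k : ℕ, 1 ≤ k → op a ↑k = 0 ∨ a.val < (op a ↑k).val := by
  intro d
  induction d with
  | zero => intro a hd _; exact absurd a.isLt (by omega)
  | succ d ihd =>
    intro a hd ha k hk
    have h2 : 2 ≤ N := by have := a.isLt; omega
    induction k with
    | zero => omega
    | succ m ihm =>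
      rcases Nat.eq_zero_or_pos m with hm | hm
      · subst hm
        have h1 : op a ((1:ℕ) : Fin N) = a + 1 := by
          rw [Nat.cast_one, hs]
        rw [h1]
        rcases add_one_cases a h2 with h | h
        · exact Or.inl h
        · exact Or.inr h
      · rcases ihm hm with hc | hc
        · rw [recN hld hs, hc, row0' hld hs]
          rcases add_one_cases a h2 with h | h
          · exact Or.inl h
          · exact Or.inr h
        · set c := op a ↑m with hcdef
          have hc1 : 1 ≤ c.val := by omega
          have hcd : N ≤ c.val + d := by omega
          have hcast : (↑(a.val + 1) : Fin N) = a + 1 := by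
            rw [cast_succ, Fin.cast_val_eq_self]
          have := ihd c hcd hc1 (a.val + 1) (by omega)
          rw [hcast] at this
          rw [recN hld hs]
          rcases this with h | h
          · exact Or.inl h
          · exact Or.inr (lt_trans hc h)

theorem L2 (hld : ∀ a b c, op a (op b c) = op (op a b) (op a c))
    (hs : ∀ a, op a 1 = a + 1) (a : Fin N) (ha : 1 ≤ a.val) :
    ∃ k : ℕ, 1 ≤ k ∧ k ≤ N - a.val ∧ op a ↑k = 0 := by
  have h2 : 2 ≤ N := by have := a.isLt; omega
  have claim : ∀ k : ℕ, 1 ≤ k → (∀ j, 1 ≤ j → j ≤ k → op a ↑j ≠ 0) →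
      a.val + k ≤ (op a ↑k).val := by
    intro k hk
    induction k with
    | zero => omega
    | succ m ihm =>
      intro hj
      rcases Nat.eq_zero_or_pos m with hm | hm
      · subst hm
        have h1 : op a ((1:ℕ) : Fin N) = a + 1 := by rw [Nat.cast_one, hs]
        rcases add_one_cases a h2 with h | h
        · exact absurd (h1.trans h) (hj 1 le_rfl le_rfl)
        · rw [h1]; omega
      · have hcm : a.val + m ≤ (op a ↑m).val :=
          ihm hm (fun j h1 h2' => hj j h1 (by omega))
        set c := op a ↑m with hcdef
        have hc1 : 1 ≤ c.val := by omega
        have hcast : (↑(a.val + 1) : Fin N) = a + 1 := by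
          rw [cast_succ, Fin.cast_val_eq_self]
        have hrec : op a ↑(m+1) = op c (a+1) := recN hld hs a m
        rcases L1 hld hs N c (by omega) hc1 (a.val+1) (by omega) with h | h
        · rw [hcast] at h
          rw [hrec]
          exact absurd (hrec.symm ▸ h) (hj (m+1) (by omega) le_rfl)
        · rw [hcast] at h
          rw [hrec]
          omega
  by_contra hcon
  push_neg at hcon
  have hk0 : 1 ≤ N - a.val := by have := a.isLt; omega
  have := claim (N - a.val) hk0 (fun j h1 h2' => hcon j h1 h2')
  have hlt := (op a ↑(N - a.val)).isLt
  omega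

theorem L3 (hld : ∀ a b c, op a (op b c) = op (op a b) (op a c))
    (hs : ∀ a, op a 1 = a + 1) (a : Fin N) (p : ℕ) (hp : 1 ≤ p)
    (hz : op a ↑p = 0) : ∀ j : ℕ, 1 ≤ j → op a ↑(j + p) = op a ↑j := by
  intro j hj
  induction j with
  | zero => omega
  | succ m ihm =>
    rcases Nat.eq_zero_or_pos m with hm | hm
    · subst hm
      have h1 : (1 + p) = p + 1 := by ring
      rw [h1, recN hld hs, hz, row0' hld hs]
      rw [Nat.cast_one, hs]
    · have h1 : (m + 1 + p) = (m + p) + 1 := by ring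
      rw [h1, recN hld hs, ihm hm, ← recN hld hs]

theorem L3m (hld : ∀ a b c, op a (op b c) = op (op a b) (op a c))
    (hs : ∀ a, op a 1 = a + 1) (a : Fin N) (p : ℕ) (hp : 1 ≤ p)
    (hz : op a ↑p = 0) : ∀ m j : ℕ, 1 ≤ j → op a ↑(j + m * p) = op a ↑j := by
  intro m
  induction m with
  | zero => intro j hj; simp
  | succ t iht =>
    intro j hj
    have h1 : j + (t+1) * p = (j + t * p) + p := by ring
    rw [h1, L3 hld hs a p hp hz _ (by omega), iht j hj]

theorem L4 (hld : ∀ a b c, op a (op b c) = op (op a b) (op a c))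
    (hs : ∀ a, op a 1 = a + 1) : ∀ a : Fin N, op a 0 = 0 := by
  suffices h : ∀ d : ℕ, ∀ a : Fin N, N ≤ a.val + d → op a 0 = 0 by
    intro a; exact h N a (by omega)
  intro d
  induction d with
  | zero => intro a hd; exact absurd a.isLt (by omega)
  | succ d ihd =>
    intro a hd
    rcases Nat.eq_zero_or_pos a.val with ha | ha
    · have : a = 0 := by ext; simpa using ha
      rw [this]; exact row0' hld hs 0
    · obtain ⟨k, hk1, _, hkz⟩ := L2 hld hs a ha
      have key : op a 0 = op (op a a) 0 := by
        conv_lhs => rw [← hkz]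
        rw [hld a a ↑k, hkz]
      have haa : op a a = op a ↑(a.val) := by rw [Fin.cast_val_eq_self]
      rcases L1 hld hs N a (by omega) ha a.val ha with h | h
      · rw [key, haa, h, row0' hld hs]
      · rw [key]
        apply ihd (op a a)
        rw [haa]; omega

theorem L6 (hld : ∀ a b c, op a (op b c) = op (op a b) (op a c))
    (hs : ∀ a, op a 1 = a + 1) (a : Fin N) (p : ℕ) (hp : 0 < p)
    (hz : op a ↑p = 0) (hmin : ∀ j : ℕ, 0 < j → op a (↑j : Fin N) = 0 → p ≤ j) :
    p ∣ N := by
  have hN0 : op a ↑N = 0 := by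
    rw [Fin.natCast_self]; exact L4 hld hs a
  rcases Nat.eq_zero_or_pos (N % p) with hr | hr
  · exact Nat.dvd_of_mod_eq_zero hr
  · exfalso
    have h2 : op a ((N % p + (N / p) * p : ℕ) : Fin N) = 0 := by
      rw [Nat.mod_add_div']; exact hN0
    have h3 : op a ((N % p : ℕ) : Fin N) = 0 :=
      (L3m hld hs a p hp hz (N / p) (N % p) hr).symm.trans h2
    have h4 := hmin (N % p) hr h3
    have h5 := Nat.mod_lt N hp
    omega

/-- Facts about the least zero-position of a nonzero row. -/
theorem sInf_facts (hld : ∀ a b c, op a (op b c) = op (op a b) (op a c))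
    (hs : ∀ a, op a 1 = a + 1) (a : Fin N) (ha : 1 ≤ a.val) :
    0 < sInf {p : ℕ | 0 < p ∧ op a ((p : ℕ) : Fin N) = 0} ∧
    op a ((sInf {p : ℕ | 0 < p ∧ op a ((p : ℕ) : Fin N) = 0} : ℕ) : Fin N) = 0 ∧
    sInf {p : ℕ | 0 < p ∧ op a ((p : ℕ) : Fin N) = 0} ≤ N - a.val ∧
    (∀ j : ℕ, 0 < j → op a ((j : ℕ) : Fin N) = 0 →
      sInf {p : ℕ | 0 < p ∧ op a ((p : ℕ) : Fin N) = 0} ≤ j) := by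
  obtain ⟨k, hk1, hk2, hkz⟩ := L2 hld hs a ha
  have hne : {p : ℕ | 0 < p ∧ op a ((p : ℕ) : Fin N) = 0}.Nonempty :=
    ⟨k, by omega, hkz⟩
  have hmem := Nat.sInf_mem hne
  refine ⟨hmem.1, hmem.2, ?_, fun j hj hjz => Nat.sInf_le ⟨hj, hjz⟩⟩
  exact le_trans (Nat.sInf_le ⟨by omega, hkz⟩) hk2

end CLDAux

open CLDAux in
/-- `p_n(0) = 2^n`, `p_n(2^n − 1) = 1`, `p_n(2^{n−1}) = 2^{n−1}`, and
`1 < p_n(a) < 2^n` whenever `0 < a < 2^n − 1`. -/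
theorem period_values (n : ℕ) (hn : 1 ≤ n) (op : Fin (2^n) → Fin (2^n) → Fin (2^n))
    (hop : IsCyclicLD n op) :
    period n op 0 = 2^n ∧
    period n op ((2^n - 1 : ℕ) : Fin (2^n)) = 1 ∧
    period n op ((2^(n-1) : ℕ) : Fin (2^n)) = 2^(n-1) ∧
    ∀ a : Fin (2^n), 0 < a.val → a.val < 2^n - 1 →
      1 < period n op a ∧ period n op a < 2^n := by
  obtain ⟨hld, hs⟩ := hop
  have hN2 : 2 ≤ 2^n := by
    calc 2 = 2^1 := by norm_num
    _ ≤ 2^n := Nat.pow_le_pow_right (by norm_num) hn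
  refine ⟨?_, ?_, ?_, ?_⟩
  · -- period of 0 is 2^n
    have hmem : (2^n : ℕ) ∈ {p : ℕ | 0 < p ∧ op 0 ((p : ℕ) : Fin (2^n)) = 0} := by
      refine ⟨pow_pos (show (0:ℕ) < 2 by norm_num) n, ?_⟩
      rw [row0 hld hs (2^n) (pow_pos (show (0:ℕ) < 2 by norm_num) n), Fin.natCast_self]
    have hle : period n op 0 ≤ 2^n := Nat.sInf_le hmem
    have hmem2 := Nat.sInf_mem ⟨2^n, hmem⟩
    obtain ⟨hpos, hz⟩ := hmem2
    rw [row0 hld hs (sInf {p : ℕ | 0 < p ∧ op 0 ((p : ℕ) : Fin (2^n)) = 0}) hpos] at hz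
    have hdvd : 2^n ∣ sInf {p : ℕ | 0 < p ∧ op 0 ((p : ℕ) : Fin (2^n)) = 0} :=
      (Fin.natCast_eq_zero).mp hz
    exact le_antisymm hle (Nat.le_of_dvd hpos hdvd)
  · -- period of 2^n - 1 is 1
    have hcast : ((2^n - 1 : ℕ) : Fin (2^n)) + 1 = 0 := by
      rw [← cast_succ]
      have : 2^n - 1 + 1 = 2^n := by omega
      rw [this, Fin.natCast_self]
    have hmem : (1 : ℕ) ∈ {p : ℕ | 0 < p ∧
        op ((2^n - 1 : ℕ) : Fin (2^n)) ((p : ℕ) : Fin (2^n)) = 0} := by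
      refine ⟨one_pos, ?_⟩
      rw [Nat.cast_one, hs, hcast]
    exact le_antisymm (Nat.sInf_le hmem) (Nat.sInf_mem ⟨1, hmem⟩).1
  · -- period of 2^(n-1) is 2^(n-1)
    obtain ⟨m, rfl⟩ : ∃ m, n = m + 1 := ⟨n - 1, by omega⟩
    have hm1 : m + 1 - 1 = m := by omega
    rw [hm1]
    have hNval : 2^(m+1) = 2 * 2^m := by rw [pow_succ]; ring
    have hm0 : 0 < 2^m := pow_pos (show (0:ℕ) < 2 by norm_num) m
    have ha₀v : ((2^m : ℕ) : Fin (2^(m+1))).val = 2^m := by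
      rw [Fin.val_natCast, Nat.mod_eq_of_lt (by omega)]
    have hclaim : ∀ k : ℕ, 1 ≤ k → k ≤ 2^m →
        op ((2^m : ℕ) : Fin (2^(m+1))) ((k : ℕ) : Fin (2^(m+1)))
          = ((2^m + k : ℕ) : Fin (2^(m+1))) := by
      intro k hk1
      induction k with
      | zero => omega
      | succ t iht =>
        intro hk2
        rcases Nat.eq_zero_or_pos t with ht | ht
        · subst ht
          rw [Nat.cast_one, hs, ← cast_succ]
        · have htle : t ≤ 2^m := by omega
          have hct := iht ht htle
          have hcv : ((2^m + t : ℕ) : Fin (2^(m+1))).val = 2^m + t := by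
            rw [Fin.val_natCast, Nat.mod_eq_of_lt (by omega)]
          -- the least zero-position q of row c divides 2^m
          obtain ⟨hq0, hqz, hqle, hqmin⟩ :=
            sInf_facts hld hs ((2^m + t : ℕ) : Fin (2^(m+1))) (by omega)
          have hqdvd : sInf {p : ℕ | 0 < p ∧
              op ((2^m + t : ℕ) : Fin (2^(m+1))) ((p : ℕ) : Fin (2^(m+1))) = 0}
              ∣ 2^(m+1) :=
            L6 hld hs _ _ hq0 hqz hqmin
          have hqlt : sInf {p : ℕ | 0 < p ∧
              op ((2^m + t : ℕ) : Fin (2^(m+1))) ((p : ℕ) : Fin (2^(m+1))) = 0}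
              < 2^m := by omega
          have hqdvd2 : sInf {p : ℕ | 0 < p ∧
              op ((2^m + t : ℕ) : Fin (2^(m+1))) ((p : ℕ) : Fin (2^(m+1))) = 0}
              ∣ 2^m := by
            obtain ⟨j, hj, hjq⟩ := (Nat.dvd_prime_pow Nat.prime_two).mp hqdvd
            rw [hjq] at hqlt ⊢
            have : j < m := by
              by_contra hcon
              push_neg at hcon
              have := Nat.pow_le_pow_right (show 1 ≤ 2 by norm_num) hcon
              omega
            exact pow_dvd_pow 2 (by omega)
          obtain ⟨t', ht'⟩ := hqdvd2
          have hper : op ((2^m + t : ℕ) : Fin (2^(m+1)))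
              ((1 + t' * (sInf {p : ℕ | 0 < p ∧
              op ((2^m + t : ℕ) : Fin (2^(m+1))) ((p : ℕ) : Fin (2^(m+1))) = 0}) : ℕ)
                : Fin (2^(m+1)))
              = op ((2^m + t : ℕ) : Fin (2^(m+1))) ((1:ℕ) : Fin (2^(m+1))) :=
            L3m hld hs _ _ hq0 hqz t' 1 le_rfl
          have h1t : 1 + t' * (sInf {p : ℕ | 0 < p ∧
              op ((2^m + t : ℕ) : Fin (2^(m+1))) ((p : ℕ) : Fin (2^(m+1))) = 0})
              = 2^m + 1 := by
            rw [mul_comm] at ht'; omega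
          rw [h1t] at hper
          have hstep : op ((2^m : ℕ) : Fin (2^(m+1))) ((t + 1 : ℕ) : Fin (2^(m+1)))
              = op ((2^m + t : ℕ) : Fin (2^(m+1))) (((2^m : ℕ) : Fin (2^(m+1))) + 1) := by
            rw [recN hld hs, hct]
          have ha₀1 : ((2^m : ℕ) : Fin (2^(m+1))) + 1 = ((2^m + 1 : ℕ) : Fin (2^(m+1))) := by
            rw [← cast_succ]
          rw [hstep, ha₀1, hper, Nat.cast_one, hs, ← cast_succ]
          norm_num [Nat.add_assoc]
    -- membership : op a₀ (2^m) = 0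
    have hmem : (2^m : ℕ) ∈ {p : ℕ | 0 < p ∧
        op ((2^m : ℕ) : Fin (2^(m+1))) ((p : ℕ) : Fin (2^(m+1))) = 0} := by
      refine ⟨hm0, ?_⟩
      rw [hclaim (2^m) hm0 le_rfl]
      have : (2^m + 2^m : ℕ) = 2^(m+1) := by omega
      rw [this, Fin.natCast_self]
    have hle : sInf {p : ℕ | 0 < p ∧
        op ((2^m : ℕ) : Fin (2^(m+1))) ((p : ℕ) : Fin (2^(m+1))) = 0} ≤ 2^m :=
      Nat.sInf_le hmem
    obtain ⟨hpos, hz⟩ := Nat.sInf_mem ⟨2^m, hmem⟩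
    have hge : 2^m ≤ sInf {p : ℕ | 0 < p ∧
        op ((2^m : ℕ) : Fin (2^(m+1))) ((p : ℕ) : Fin (2^(m+1))) = 0} := by
      by_contra hcon
      push_neg at hcon
      rw [hclaim _ hpos (by omega)] at hz
      have hv : (((2^m + sInf {p : ℕ | 0 < p ∧
          op ((2^m : ℕ) : Fin (2^(m+1))) ((p : ℕ) : Fin (2^(m+1))) = 0} : ℕ)
          : Fin (2^(m+1)))).val = 2^m + sInf {p : ℕ | 0 < p ∧
          op ((2^m : ℕ) : Fin (2^(m+1))) ((p : ℕ) : Fin (2^(m+1))) = 0} := by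
        rw [Fin.val_natCast, Nat.mod_eq_of_lt (by omega)]
      rw [hz] at hv
      simp at hv
      omega
    exact le_antisymm hle hge
  · -- 1 < period a < 2^n for 0 < a < 2^n - 1
    intro a ha1 ha2
    obtain ⟨hq0, hqz, hqle, hqmin⟩ := sInf_facts hld hs a ha1
    constructor
    · rcases Nat.lt_or_ge 1 (sInf {p : ℕ | 0 < p ∧ op a ((p : ℕ) : Fin (2^n)) = 0})
        with h | h
      · exact h
      · exfalso
        have h1 : sInf {p : ℕ | 0 < p ∧ op a ((p : ℕ) : Fin (2^n)) = 0} = 1 := by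
          omega
        rw [h1, Nat.cast_one, hs] at hqz
        have hv : (a + 1).val = a.val + 1 := by
          rw [Fin.val_add, Fin.val_one', Nat.mod_eq_of_lt hN2,
            Nat.mod_eq_of_lt (by omega)]
        rw [hqz] at hv
        simp at hv
    · have := a.isLt
      show sInf {p : ℕ | 0 < p ∧ op a ((p : ℕ) : Fin (2^n)) = 0} < 2^n
      omega
end

section
/- Reduction modulo 2^n is a homomorphism from A_{n+1} onto A_n: for all a, b ∈ {0,1,…,2^{n+1}−1}, (a *_{n+1} b) mod 2^n = (a mod 2^n) *_n (b mod 2^n), where *_m denotes the operation of A_m. -/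
open Fin.NatCast
open Fin.CommRing

section CyclicLDAux

variable {m : ℕ} (op : Fin (2^m) → Fin (2^m) → Fin (2^m))

private lemma succ_rule (h : IsCyclicLD m op) (a b : Fin (2^m)) :
    op a (b+1) = op (op a b) (a+1) := by
  have := h.1 a b 1
  rwa [h.2 b, h.2 a] at this

private lemma zero_row (h : IsCyclicLD m op) (b : Fin (2^m)) : op 0 b = b := by
  have key : ∀ k : ℕ, op 0 (1 + (k : Fin (2^m))) = 1 + (k : Fin (2^m)) := by
    intro k
    induction k with
    | zero => simpa using h.2 0
    | succ k ih =>
      have e : (1 + ((k+1 : ℕ) : Fin (2^m))) = (1 + (k : Fin (2^m))) + 1 := by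
        push_cast; ring
      rw [e, succ_rule op h, ih]
      have := h.2 (1 + (k : Fin (2^m)))
      simpa using this
  have hb : (1 : Fin (2^m)) + ((b - 1).val : Fin (2^m)) = b := by
    rw [Fin.cast_val_eq_self]; ring
  calc op 0 b = op 0 (1 + ((b-1).val : Fin (2^m))) := by rw [hb]
    _ = 1 + ((b-1).val : Fin (2^m)) := key _
    _ = b := hb

private lemma gt_or_zero (h : IsCyclicLD m op) :
    ∀ s : ℕ, ∀ a : Fin (2^m), 2^m - a.val ≤ s → a ≠ 0 →
    ∀ b, op a b = 0 ∨ a.val < (op a b).val := by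
  intro s
  induction s with
  | zero =>
    intro a ha _ b
    exfalso; have := a.is_lt; omega
  | succ s ih =>
    intro a ha ha0
    have haval : a.val ≠ 0 := fun hv => ha0 (Fin.ext (by simpa using hv))
    have h2 : 1 < 2^m := by have := a.is_lt; omega
    have hone : (1 : Fin (2^m)).val = 1 := by
      simp [Fin.val_one', Nat.mod_eq_of_lt h2]
    have hsucc : ∀ c : Fin (2^m), c + 1 = 0 ∨ c.val < (c+1).val := by
      intro c
      rcases Nat.lt_or_ge (c.val + 1) (2^m) with hlt | hge
      · right
        have : (c+1).val = c.val + 1 := by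
          simp [Fin.add_def, hone, Nat.mod_eq_of_lt hlt]
        omega
      · left
        have hcv : c.val + 1 = 2^m := by have := c.is_lt; omega
        apply Fin.ext
        simp [Fin.add_def, hone, hcv]
    have key : ∀ k : ℕ, op a (1 + (k : Fin (2^m))) = 0 ∨
        a.val < (op a (1 + (k : Fin (2^m)))).val := by
      intro k
      induction k with
      | zero =>
        simp only [Nat.cast_zero, add_zero]
        rw [h.2 a]
        exact hsucc a
      | succ k ih2 =>
        have e : (1 + ((k+1 : ℕ) : Fin (2^m))) = (1 + (k : Fin (2^m))) + 1 := by
          push_cast; ring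
        rw [e, succ_rule op h]
        rcases ih2 with hc0 | hclt
        · rw [hc0, zero_row op h]
          exact hsucc a
        · set c := op a (1 + (k : Fin (2^m))) with hc
          have hc0 : c ≠ 0 := by
            intro hz; rw [hz] at hclt; simp at hclt
          have hcs : 2^m - c.val ≤ s := by have := c.is_lt; omega
          rcases ih c hcs hc0 (a+1) with h0 | h1
          · left; exact h0
          · right; omega
    intro b
    have hb : (1 : Fin (2^m)) + ((b - 1).val : Fin (2^m)) = b := by
      rw [Fin.cast_val_eq_self]; ring
    have := key (b-1).val
    rwa [hb] at this

end CyclicLDAux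

private lemma mod_hom_main (n : ℕ)
    (op₁ : Fin (2^(n+1)) → Fin (2^(n+1)) → Fin (2^(n+1))) (hop₁ : IsCyclicLD (n+1) op₁)
    (op₀ : Fin (2^n) → Fin (2^n) → Fin (2^n)) (hop₀ : IsCyclicLD n op₀) :
    ∀ s : ℕ, ∀ a : Fin (2^(n+1)), (a = 0 ∨ 2^(n+1) - a.val ≤ s) → ∀ b : Fin (2^(n+1)),
    (((op₁ a b).val : ℕ) : Fin (2^n)) = op₀ ((a.val : ℕ) : Fin (2^n)) ((b.val : ℕ) : Fin (2^n)) := by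
  have hdvd : (2^n : ℕ) ∣ 2^(n+1) := pow_dvd_pow 2 (Nat.le_succ n)
  have castmod : ∀ x : ℕ, ((x % 2^(n+1) : ℕ) : Fin (2^n)) = (x : Fin (2^n)) := by
    intro x; apply Fin.ext
    simp [Fin.val_natCast, Nat.mod_mod_of_dvd x hdvd]
  have h2M : 1 < 2^(n+1) := Nat.one_lt_pow (Nat.succ_ne_zero n) (by omega)
  have hone1 : (1 : Fin (2^(n+1))).val = 1 := by
    simp [Fin.val_one', Nat.mod_eq_of_lt h2M]
  have πsucc : ∀ c : Fin (2^(n+1)),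
      (((c+1).val : ℕ) : Fin (2^n)) = ((c.val : ℕ) : Fin (2^n)) + 1 := by
    intro c
    have e : (c+1).val = (c.val + 1) % 2^(n+1) := by simp [Fin.add_def, hone1]
    rw [e, castmod]
    push_cast; ring
  intro s
  induction s with
  | zero =>
    intro a ha b
    rcases ha with ha0 | has
    · subst ha0
      simp only [Fin.val_zero, Nat.cast_zero, zero_row op₁ hop₁, zero_row op₀ hop₀]
    · exfalso; have := a.is_lt; omega
  | succ s ihs =>
    intro a ha b
    by_cases ha0 : a = 0
    · subst ha0
      simp only [Fin.val_zero, Nat.cast_zero, zero_row op₁ hop₁, zero_row op₀ hop₀]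
    · have has : 2^(n+1) - a.val ≤ s + 1 := ha.resolve_left ha0
      have key : ∀ k : ℕ, (((op₁ a (1 + (k : Fin (2^(n+1))))).val : ℕ) : Fin (2^n)) =
          op₀ ((a.val : ℕ) : Fin (2^n)) ((1 + k : ℕ) : Fin (2^n)) := by
        intro k
        induction k with
        | zero =>
          simp only [Nat.cast_zero, add_zero, Nat.add_zero]
          rw [hop₁.2 a, πsucc a, Nat.cast_one, hop₀.2]
        | succ k ihk =>
          have e : (1 + ((k+1 : ℕ) : Fin (2^(n+1)))) = (1 + (k : Fin (2^(n+1)))) + 1 := by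
            push_cast; ring
          have eN : ((1 + (k+1) : ℕ) : Fin (2^n)) = ((1 + k : ℕ) : Fin (2^n)) + 1 := by
            push_cast; ring
          rw [e, succ_rule op₁ hop₁, eN, succ_rule op₀ hop₀, ← ihk, ← πsucc a]
          rcases gt_or_zero op₁ hop₁ (s+1) a has ha0 (1 + (k : Fin (2^(n+1)))) with h0 | hlt
          · rw [h0, zero_row op₁ hop₁]
            simp only [Fin.val_zero, Nat.cast_zero, zero_row op₀ hop₀]
          · set c := op₁ a (1 + (k : Fin (2^(n+1)))) with hc
            have hcs : 2^(n+1) - c.val ≤ s := by have := c.is_lt; omega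
            exact ihs c (Or.inr hcs) (a+1)
      have hb : (1 : Fin (2^(n+1))) + (((b - 1).val : ℕ) : Fin (2^(n+1))) = b := by
        rw [Fin.cast_val_eq_self]; ring
      have hv : (1 + (b-1).val) % 2^(n+1) = b.val := by
        have h1 : (b-1).val = (b.val + (2^(n+1) - 1)) % 2^(n+1) := by
          simp [Fin.sub_def, hone1, Nat.add_comm]
        have h2 : (1 + (b-1).val) % 2^(n+1) = (1 + (b.val + (2^(n+1)-1))) % 2^(n+1) := by
          rw [h1]; exact Nat.ModEq.add_left 1 (Nat.mod_modEq _ _)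
        have h3 : 1 + (b.val + (2^(n+1)-1)) = b.val + 2^(n+1) := by omega
        rw [h2, h3, Nat.add_mod_right, Nat.mod_eq_of_lt b.is_lt]
      have hbN : ((1 + (b-1).val : ℕ) : Fin (2^n)) = ((b.val : ℕ) : Fin (2^n)) := by
        rw [← castmod (1 + (b-1).val), hv]
      have := key (b-1).val
      rwa [hb, hbN] at this

/-- reduction modulo `2^n` is a homomorphism from `A_{n+1}` onto `A_n`:
`(a *_{n+1} b) mod 2^n = (a mod 2^n) *_n (b mod 2^n)`. -/
theorem mod_hom (n : ℕ)
    (op₁ : Fin (2^(n+1)) → Fin (2^(n+1)) → Fin (2^(n+1))) (hop₁ : IsCyclicLD (n+1) op₁)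
    (op₀ : Fin (2^n) → Fin (2^n) → Fin (2^n)) (hop₀ : IsCyclicLD n op₀)
    (a b : Fin (2^(n+1))) :
    (op₁ a b).val % 2^n =
      (op₀ ((a.val % 2^n : ℕ) : Fin (2^n)) ((b.val % 2^n : ℕ) : Fin (2^n))).val := by
  have castmodN : ∀ x : ℕ, ((x % 2^n : ℕ) : Fin (2^n)) = (x : Fin (2^n)) := by
    intro x; apply Fin.ext
    simp [Fin.val_natCast, Nat.mod_mod_of_dvd x dvd_rfl]
  have := congrArg Fin.val
    (mod_hom_main n op₁ hop₁ op₀ hop₀ (2^(n+1)) a (Or.inr (Nat.sub_le _ _)) b)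
  rw [castmodN, castmodN]
  simpa [Fin.val_natCast] using this
end

section
/- For every natural number n and every a < 2^n, the period of a in A_{n+1} either equals the period of a in A_n or is twice it: p_{n+1}(a) = p_n(a) or p_{n+1}(a) = 2·p_n(a). -/
open Fin.NatCast

namespace LaverAux

variable {m : ℕ} {op : Fin (2^m) → Fin (2^m) → Fin (2^m)}

lemma Npos : 0 < 2^m := Nat.two_pow_pos m

lemma step (hop : IsCyclicLD m op) (a b : Fin (2^m)) :
    op a (b + 1) = op (op a b) (a + 1) := by
  rw [← hop.2 b, hop.1, hop.2]

lemma cast_succ (k : ℕ) : ((k + 1 : ℕ) : Fin (2^m)) = (k : ℕ) + 1 := by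
  push_cast; ring

lemma exists_rep (b : Fin (2^m)) : ∃ k : ℕ, b = ((k + 1 : ℕ) : Fin (2^m)) := by
  refine ⟨b.val + (2^m - 1), ?_⟩
  have h : b.val + (2^m - 1) + 1 = b.val + 2^m := by have := @Npos m; omega
  rw [h, Nat.cast_add, Fin.cast_val_eq_self, Fin.natCast_self, add_zero]

lemma op_zero_cast (hop : IsCyclicLD m op) (k : ℕ) :
    op 0 ((k + 1 : ℕ) : Fin (2^m)) = ((k + 1 : ℕ) : Fin (2^m)) := by
  induction k with
  | zero => simpa using hop.2 0
  | succ k ih =>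
      rw [cast_succ (k+1), step hop, ih, zero_add, hop.2]

lemma op_zero (hop : IsCyclicLD m op) (b : Fin (2^m)) : op 0 b = b := by
  obtain ⟨k, rfl⟩ := exists_rep b
  exact op_zero_cast hop k

lemma succ_dicho (a : Fin (2^m)) : a + 1 = 0 ∨ a.val < (a + 1).val := by
  rcases Nat.lt_or_ge (a.val + 1) (2^m) with h | h
  · right
    have : (a + 1).val = a.val + 1 := by
      rw [Fin.add_def]; simp [Nat.mod_eq_of_lt h]
    omega
  · left
    have hv : a.val + 1 = 2^m := by have := a.isLt; omega
    have : (a + 1).val = 0 := by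
      rw [Fin.add_def]; simp [hv]
    exact Fin.ext this

/-- Master lemma: every entry of row `a` is `0` or greater than `a`. -/
lemma master (hop : IsCyclicLD m op) (a b : Fin (2^m)) :
    op a b = 0 ∨ a.val < (op a b).val := by
  suffices h : ∀ d (a : Fin (2^m)), 2^m - a.val ≤ d → ∀ b, op a b = 0 ∨ a.val < (op a b).val from
    h (2^m) a (Nat.sub_le _ _) b
  intro d
  induction d with
  | zero => intro a ha; have := a.isLt; omega
  | succ d ih =>
      intro a ha b
      obtain ⟨k, rfl⟩ := exists_rep b
      induction k with
      | zero =>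
          have h1 : ((0 + 1 : ℕ) : Fin (2^m)) = 1 := by norm_num
          rw [h1, hop.2]
          exact succ_dicho a
      | succ k ihk =>
          rw [cast_succ (k+1), step hop]
          rcases ihk with h0 | hlt
          · rw [h0, op_zero hop]
            exact succ_dicho a
          · have hd : 2^m - (op a ((k+1 : ℕ) : Fin (2^m))).val ≤ d := by
              have := (op a ((k+1 : ℕ) : Fin (2^m))).isLt
              omega
            rcases ih (op a ((k+1 : ℕ) : Fin (2^m))) hd (a + 1) with h0 | h
            · exact Or.inl h0
            · exact Or.inr (lt_trans hlt h)

/-- Along a row, values strictly increase until they hit `0`. -/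
lemma growth (hop : IsCyclicLD m op) (a b : Fin (2^m)) (h : op a b ≠ 0) :
    op a (b + 1) = 0 ∨ (op a b).val < (op a (b + 1)).val := by
  rw [step hop]
  exact master hop (op a b) (a + 1)

lemma exists_zero (hop : IsCyclicLD m op) (a : Fin (2^m)) :
    ∃ k : ℕ, 0 < k ∧ op a ((k : ℕ) : Fin (2^m)) = 0 := by
  by_contra hc
  push_neg at hc
  have key : ∀ k : ℕ, 0 < k → k ≤ (op a ((k : ℕ) : Fin (2^m))).val := by
    intro k hk
    induction k with
    | zero => omega
    | succ k ihk =>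
        rcases Nat.eq_zero_or_pos k with rfl | hk'
        · have h1 : ((0 + 1 : ℕ) : Fin (2^m)) = 1 := by norm_num
          rw [h1, hop.2]
          have hne := hc 1 (by norm_num)
          have h1' : ((1 : ℕ) : Fin (2^m)) = 1 := Nat.cast_one
          rw [h1', hop.2] at hne
          have hv : (a + 1).val ≠ 0 := fun h => hne (Fin.ext (by simpa using h))
          omega
        · have ih := ihk hk'
          have hne : op a ((k:ℕ) : Fin (2^m)) ≠ 0 := hc k hk'
          rcases growth hop a ((k:ℕ) : Fin (2^m)) hne with h0 | hlt
          · rw [← cast_succ] at h0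
            exact absurd h0 (hc (k+1) (by omega))
          · rw [← cast_succ] at hlt
            omega
  have := key (2^m) Npos
  have := (op a ((2^m : ℕ) : Fin (2^m))).isLt
  omega

lemma period_mem (hop : IsCyclicLD m op) (a : Fin (2^m)) :
    0 < period m op a ∧ op a ((period m op a : ℕ) : Fin (2^m)) = 0 :=
  Nat.sInf_mem (exists_zero hop a)

lemma period_min (hop : IsCyclicLD m op) (a : Fin (2^m)) {k : ℕ}
    (h1 : 0 < k) (h2 : k < period m op a) : op a ((k : ℕ) : Fin (2^m)) ≠ 0 := by
  intro h
  exact Nat.notMem_of_lt_sInf h2 ⟨h1, h⟩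

/-- Forward periodicity of each row. -/
lemma shift (hop : IsCyclicLD m op) (a : Fin (2^m)) (k : ℕ) :
    op a ((k + 1 + period m op a : ℕ) : Fin (2^m)) = op a ((k + 1 : ℕ) : Fin (2^m)) := by
  induction k with
  | zero =>
      have h : (0 + 1 + period m op a) = period m op a + 1 := by ring
      rw [h, cast_succ, step hop, (period_mem hop a).2, op_zero hop]
      have h1 : ((0 + 1 : ℕ) : Fin (2^m)) = 1 := by norm_num
      rw [h1, hop.2]
  | succ k ih =>
      have h : (k + 1 + 1 + period m op a) = (k + 1 + period m op a) + 1 := by ring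
      rw [h, cast_succ, step hop, ih, ← step hop, ← cast_succ]

lemma shift_mul (hop : IsCyclicLD m op) (a : Fin (2^m)) (j k : ℕ) :
    op a ((k + 1 + j * period m op a : ℕ) : Fin (2^m)) = op a ((k + 1 : ℕ) : Fin (2^m)) := by
  induction j with
  | zero => norm_num
  | succ j ih =>
      have h : k + 1 + (j+1) * period m op a = (k + j * period m op a) + 1 + period m op a := by
        ring
      rw [h, shift hop]
      have h2 : k + j * period m op a + 1 = k + 1 + j * period m op a := by ring
      rw [h2, ih]

lemma mul_period_zero (hop : IsCyclicLD m op) (a : Fin (2^m)) (j : ℕ) :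
    op a (((j + 1) * period m op a : ℕ) : Fin (2^m)) = 0 := by
  have hp := (period_mem hop a).1
  have h : (j + 1) * period m op a = (period m op a - 1) + 1 + j * period m op a := by
    have : period m op a - 1 + 1 = period m op a := by omega
    rw [Nat.add_mul, this]; ring
  rw [h, shift_mul hop]
  have h2 : period m op a - 1 + 1 = period m op a := by omega
  rw [h2]
  exact (period_mem hop a).2

/-- The period divides `2^m`. -/
lemma period_dvd (hop : IsCyclicLD m op) (a : Fin (2^m)) : period m op a ∣ 2^m := by
  set p := period m op a with hpdef
  have hp := (period_mem hop a).1
  set g := Nat.gcd p (2^m) with hg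
  have hgp : g ∣ p := Nat.gcd_dvd_left _ _
  have hgN : g ∣ 2^m := Nat.gcd_dvd_right _ _
  have hgpos : 0 < g := Nat.gcd_pos_of_pos_left _ hp
  -- find c ≥ 1 with (c * p : Fin 2^m) = g
  have bezout : (g : ℤ) = p * Nat.gcdA p (2^m) + 2^m * Nat.gcdB p (2^m) := by
    have := Nat.gcd_eq_gcd_ab p (2^m)
    push_cast at this ⊢
    linarith [this]
  set A := Nat.gcdA p (2^m)
  set B := Nat.gcdB p (2^m)
  have hN : (0 : ℤ) < 2^m := by positivity
  set c : ℕ := (A % (2^m) + 2^m).toNat with hc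
  have hcz : (c : ℤ) = A % (2^m) + 2^m := by
    rw [hc, Int.toNat_of_nonneg]
    have := Int.emod_nonneg A (ne_of_gt hN)
    linarith
  have hc1 : 1 ≤ c := by
    have h1 := Int.emod_nonneg A (ne_of_gt hN)
    have : (1 : ℤ) ≤ (c : ℤ) := by rw [hcz]; omega
    exact_mod_cast this
  -- (c * p : Fin 2^m) = g since c ≡ A mod 2^m
  have hcz' : (c : ℤ) = A - 2^m * (A / 2^m) + 2^m := by
    rw [hcz, Int.emod_def]
  have hkey : ((c * p : ℕ) : Fin (2^m)) = ((g : ℕ) : Fin (2^m)) := by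
    have hdiff : ((2^m : ℕ) : ℤ) ∣ ((c * p : ℕ) : ℤ) - (g : ℤ) := by
      refine ⟨p - (A / 2^m) * p - B, ?_⟩
      push_cast
      rw [hcz', bezout]
      ring
    haveI : NeZero (2^m) := ⟨by positivity⟩
    letI : CommRing (Fin (2^m)) := Fin.instCommRing _
    have h0 := (CharP.intCast_eq_zero_iff (Fin (2^m)) (2^m) (((c * p : ℕ) : ℤ) - (g : ℤ))).mpr
      (by exact_mod_cast hdiff)
    rw [Int.cast_sub, sub_eq_zero] at h0
    exact_mod_cast h0
  -- hence op a g = 0 with 0 < g ≤ p, so p ≤ g by minimality, so p = g ∣ 2^m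
  have hczero : op a ((c * p : ℕ) : Fin (2^m)) = 0 := by
    have h : c * p = (c - 1 + 1) * p := by congr 1; omega
    rw [h]
    exact mul_period_zero hop a (c - 1)
  rw [hkey] at hczero
  have hgmem : g ∈ {q : ℕ | 0 < q ∧ op a ((q : ℕ) : Fin (2^m)) = 0} := ⟨hgpos, hczero⟩
  have hle : p ≤ g := Nat.sInf_le hgmem
  have hge : g ≤ p := Nat.le_of_dvd hp hgp
  have : p = g := le_antisymm hle hge
  rw [this]
  exact hgN

/-- Zeros in row `a` occur exactly at the multiples of the period. -/
lemma zero_iff (hop : IsCyclicLD m op) (a : Fin (2^m)) (k : ℕ) :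
    op a ((k : ℕ) : Fin (2^m)) = 0 ↔ period m op a ∣ k := by
  set p := period m op a with hpdef
  have hp := (period_mem hop a).1
  constructor
  · intro h
    by_contra hnd
    set r := k % p with hr
    have hr0 : 0 < r := by
      rcases Nat.eq_zero_or_pos r with h0 | h0
      · exact absurd (Nat.dvd_of_mod_eq_zero h0) hnd
      · exact h0
    have hrp : r < p := Nat.mod_lt _ hp
    have hk : k = (r - 1) + 1 + (k / p) * p := by
      have := Nat.mod_add_div' k p
      omega
    rw [hk, shift_mul hop] at h
    have h2 : r - 1 + 1 = r := by omega
    rw [h2] at h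
    exact period_min hop a hr0 hrp h
  · intro ⟨j, hj⟩
    rcases Nat.eq_zero_or_pos j with rfl | hjpos
    · -- k = 0 : op a 0 = op a (2^m) = 0 since p ∣ 2^m
      have hk0 : k = 0 := by simpa using hj
      subst hk0
      obtain ⟨t, ht⟩ := period_dvd hop a
      have htpos : 0 < t := by
        rcases Nat.eq_zero_or_pos t with rfl | h
        · simp at ht
        · exact h
      have e : 2^m = (t - 1 + 1) * p := by
        have ht' : t - 1 + 1 = t := by omega
        rw [ht', ht, Nat.mul_comm]
      have h1 : ((0 : ℕ) : Fin (2^m)) = (((t - 1 + 1) * p : ℕ) : Fin (2^m)) := by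
        rw [← e]
        simp [Fin.natCast_self]
      rw [h1]
      exact mul_period_zero hop a (t - 1)
    · rw [hj]
      have h2 : p * j = (j - 1 + 1) * p := by rw [Nat.mul_comm]; congr 1; omega
      rw [h2]
      exact mul_period_zero hop a (j - 1)

/-- Strictly increasing strictly before the period. -/
lemma mono (hop : IsCyclicLD m op) (a : Fin (2^m)) {j k : ℕ}
    (h1 : 1 ≤ j) (h2 : j < k) (h3 : k < period m op a) :
    (op a ((j : ℕ) : Fin (2^m))).val < (op a ((k : ℕ) : Fin (2^m))).val := by
  induction k with
  | zero => omega
  | succ k ihk =>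
      have hkp : k < period m op a := by omega
      have hone : op a ((k : ℕ) : Fin (2^m)) ≠ 0 := by
        intro h
        have := (zero_iff hop a k).mp h
        have : period m op a ≤ k := Nat.le_of_dvd (by omega) this
        omega
      have hg := growth hop a ((k : ℕ) : Fin (2^m)) hone
      rw [← cast_succ] at hg
      rcases hg with h0 | hlt
      · have := (zero_iff hop a (k+1)).mp h0
        have : period m op a ≤ k + 1 := Nat.le_of_dvd (by omega) this
        omega
      · rcases Nat.lt_or_ge j k with hjk | hjk
        · exact lt_trans (ihk hjk hkp) hlt
        · have : j = k := by omega
          subst this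
          exact hlt

/-! ### Projection from `A_{n+1}` to `A_n` -/

def pr (n : ℕ) (x : Fin (2^(n+1))) : Fin (2^n) := ((x.val : ℕ) : Fin (2^n))

lemma pr_cast (n : ℕ) (k : ℕ) :
    pr n ((k : ℕ) : Fin (2^(n+1))) = ((k : ℕ) : Fin (2^n)) := by
  unfold pr
  apply Fin.ext
  rw [Fin.val_natCast, Fin.val_natCast, Fin.val_natCast]
  exact Nat.mod_mod_of_dvd k (pow_dvd_pow 2 (Nat.le_succ n))

lemma pr_zero (n : ℕ) : pr n 0 = 0 := by
  unfold pr
  simp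

lemma pr_add_one (n : ℕ) (x : Fin (2^(n+1))) : pr n (x + 1) = pr n x + 1 := by
  have hx : x + 1 = ((x.val + 1 : ℕ) : Fin (2^(n+1))) := by
    rw [Nat.cast_add, Fin.cast_val_eq_self, Nat.cast_one]
  have hx2 : pr n x = ((x.val : ℕ) : Fin (2^n)) := rfl
  rw [hx, pr_cast, Nat.cast_add, hx2, Nat.cast_one]

lemma pr_eq_zero_iff (n : ℕ) (x : Fin (2^(n+1))) :
    pr n x = 0 ↔ x = 0 ∨ x = ((2^n : ℕ) : Fin (2^(n+1))) := by
  constructor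
  · intro h
    have hval : x.val % 2^n = 0 := by
      have : ((x.val : ℕ) : Fin (2^n)).val = (0 : Fin (2^n)).val := by rw [← h]; rfl
      rw [Fin.val_natCast] at this
      simpa using this
    have hdvd : 2^n ∣ x.val := Nat.dvd_of_mod_eq_zero hval
    obtain ⟨t, ht⟩ := hdvd
    have hlt : x.val < 2^(n+1) := x.isLt
    have h2 : 2^(n+1) = 2^n * 2 := by rw [pow_succ]
    have ht2 : t < 2 := by
      by_contra hc
      push_neg at hc
      have := Nat.mul_le_mul_left (2^n) hc
      omega
    have hpos : 0 < 2^n := Nat.two_pow_pos n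
    interval_cases t
    · left
      apply Fin.ext
      have hx0 : x.val = 0 := by simpa using ht
      simp [hx0]
    · right
      have hx1 : x.val = 2^n := by simpa using ht
      apply Fin.ext
      have hlt2 : 2^n < 2^(n+1) := by omega
      rw [Fin.val_natCast, Nat.mod_eq_of_lt hlt2, hx1]
  · rintro (rfl | rfl)
    · exact pr_zero n
    · rw [pr_cast, Fin.natCast_self]

/-- The reduction map is a homomorphism of the tables. -/
lemma hom_s4 {n : ℕ} {op₀ : Fin (2^n) → Fin (2^n) → Fin (2^n)}
    {op₁ : Fin (2^(n+1)) → Fin (2^(n+1)) → Fin (2^(n+1))}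
    (hop₀ : IsCyclicLD n op₀) (hop₁ : IsCyclicLD (n+1) op₁)
    (x y : Fin (2^(n+1))) :
    pr n (op₁ x y) = op₀ (pr n x) (pr n y) := by
  suffices h : ∀ d (x : Fin (2^(n+1))), 2^(n+1) - x.val ≤ d →
      ∀ y, pr n (op₁ x y) = op₀ (pr n x) (pr n y) from h (2^(n+1)) x (Nat.sub_le _ _) y
  intro d
  induction d with
  | zero => intro x hx; have := x.isLt; omega
  | succ d ih =>
      intro x hx y
      obtain ⟨k, rfl⟩ := exists_rep y
      induction k with
      | zero =>
          have h1 : ((0 + 1 : ℕ) : Fin (2^(n+1))) = 1 := by norm_num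
          have h1' : ((0 + 1 : ℕ) : Fin (2^n)) = 1 := by norm_num
          rw [pr_cast, h1, h1', hop₁.2, hop₀.2, pr_add_one]
      | succ k ihk =>
          rw [pr_cast] at ihk ⊢
          rw [cast_succ (k+1), step hop₁]
          have hrhs : ((k + 1 + 1 : ℕ) : Fin (2^n)) = ((k+1 : ℕ) : Fin (2^n)) + 1 :=
            cast_succ (k+1)
          rw [hrhs, step hop₀, ← ihk, ← pr_add_one]
          rcases master hop₁ x ((k+1 : ℕ) : Fin (2^(n+1))) with h0 | hlt
          · rw [h0, op_zero hop₁, pr_zero, op_zero hop₀]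
          · exact ih (op₁ x ((k+1 : ℕ) : Fin (2^(n+1))))
              (by have := (op₁ x ((k+1 : ℕ) : Fin (2^(n+1)))).isLt; omega) (x + 1)

end LaverAux

/-- for `a < 2^n`, either `p_{n+1}(a) = p_n(a)` or `p_{n+1}(a) = 2·p_n(a)`. -/
theorem period_stays_or_doubles (n : ℕ) (a : ℕ) (ha : a < 2^n)
    (op₀ : Fin (2^n) → Fin (2^n) → Fin (2^n)) (hop₀ : IsCyclicLD n op₀)
    (op₁ : Fin (2^(n+1)) → Fin (2^(n+1)) → Fin (2^(n+1))) (hop₁ : IsCyclicLD (n+1) op₁) :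
    period (n+1) op₁ ((a : ℕ) : Fin (2^(n+1))) = period n op₀ ((a : ℕ) : Fin (2^n)) ∨
    period (n+1) op₁ ((a : ℕ) : Fin (2^(n+1))) = 2 * period n op₀ ((a : ℕ) : Fin (2^n)) := by
  classical
  set A₁ : Fin (2^(n+1)) := ((a : ℕ) : Fin (2^(n+1))) with hA₁
  set A₀ : Fin (2^n) := ((a : ℕ) : Fin (2^n)) with hA₀
  set p₀ := period n op₀ A₀ with hp₀def
  set p₁ := period (n+1) op₁ A₁ with hp₁def
  have hp0 := LaverAux.period_mem hop₀ A₀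
  have hp1 := LaverAux.period_mem hop₁ A₁
  have hπA : LaverAux.pr n A₁ = A₀ := by rw [hA₁, hA₀, LaverAux.pr_cast]
  -- p₀ divides p₁
  have h1 : op₀ A₀ ((p₁ : ℕ) : Fin (2^n)) = 0 := by
    have h := LaverAux.hom_s4 hop₀ hop₁ A₁ ((p₁ : ℕ) : Fin (2^(n+1)))
    rw [hp1.2, LaverAux.pr_zero, hπA, LaverAux.pr_cast] at h
    exact h.symm
  have hdvd : p₀ ∣ p₁ := (LaverAux.zero_iff hop₀ A₀ p₁).mp h1
  -- p₁ ≤ 2 p₀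
  have hle : p₁ ≤ 2 * p₀ := by
    by_contra hgt
    push_neg at hgt
    have key : ∀ q : ℕ, 0 < q → q < p₁ → op₀ A₀ ((q : ℕ) : Fin (2^n)) = 0 →
        op₁ A₁ ((q : ℕ) : Fin (2^(n+1))) = ((2^n : ℕ) : Fin (2^(n+1))) := by
      intro q hq hqp hz
      have h := LaverAux.hom_s4 hop₀ hop₁ A₁ ((q : ℕ) : Fin (2^(n+1)))
      rw [hπA, LaverAux.pr_cast, hz] at h
      rcases (LaverAux.pr_eq_zero_iff n _).mp h with h0 | h2
      · exfalso
        have := (LaverAux.zero_iff hop₁ A₁ q).mp h0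
        have := Nat.le_of_dvd hq this
        omega
      · exact h2
    have e1 := key p₀ hp0.1 (by omega) hp0.2
    have hz2 : op₀ A₀ ((2 * p₀ : ℕ) : Fin (2^n)) = 0 :=
      (LaverAux.zero_iff hop₀ A₀ (2 * p₀)).mpr ⟨2, by ring⟩
    have e2 := key (2 * p₀) (by omega) (by omega) hz2
    have hmono := LaverAux.mono hop₁ A₁ (j := p₀) (k := 2 * p₀) hp0.1 (by omega) (by omega)
    rw [e1, e2] at hmono
    omega
  obtain ⟨cc, hcc⟩ := hdvd
  have hp0pos := hp0.1
  have hp1pos := hp1.1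
  have hcc1 : 1 ≤ cc := by
    rcases Nat.eq_zero_or_pos cc with rfl | h
    · simp at hcc; omega
    · exact h
  have hcc2 : cc ≤ 2 := by
    by_contra hc
    push_neg at hc
    have h3 : p₀ * 3 ≤ p₀ * cc := Nat.mul_le_mul_left p₀ (by omega)
    omega
  interval_cases cc
  · left; omega
  · right; omega
end

section
/- For every natural number n and every a < 2^n: if the period of a doubles from A_n to A_{n+1}, say p_n(a) = 2^k and p_{n+1}(a) = 2^{k+1}, then a *_{n+1} 2^k = 2^n in A_{n+1}. -/
open Fin.NatCast

section Generic
open Fin.CommRing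
variable {N : ℕ} [NeZero N]

lemma fin_cast_succ (x : Fin N) : x + 1 = ((x.val + 1 : ℕ) : Fin N) := by
  rw [Nat.cast_add_one, Fin.cast_val_eq_self]

lemma fin_succ_cases (x : Fin N) : x + 1 = 0 ∨ x.val < (x + 1).val := by
  rcases Nat.lt_or_ge (x.val + 1) N with h | h
  · right
    rw [fin_cast_succ, Fin.val_natCast, Nat.mod_eq_of_lt h]
    omega
  · left
    have hx := x.isLt
    have hxN : x.val + 1 = N := by omega
    rw [fin_cast_succ, hxN, Fin.natCast_self]

variable (op : Fin N → Fin N → Fin N)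
  (hLD : ∀ a b c, op a (op b c) = op (op a b) (op a c))
  (hone : ∀ a, op a 1 = a + 1)

include hLD hone in
lemma ld_step (a b : Fin N) : op a (b + 1) = op (op a b) (a + 1) := by
  have h := hLD a b 1
  rw [hone, hone] at h
  exact h

include hLD hone in
lemma ld_zero_row : ∀ b : Fin N, op 0 b = b := by
  have key : ∀ t : ℕ, 0 < t → op 0 ((t : ℕ) : Fin N) = ((t : ℕ) : Fin N) := by
    intro t
    induction t with
    | zero => omega
    | succ t ih =>
      intro _
      rcases Nat.eq_zero_or_pos t with h0 | hpos
      · subst h0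
        simpa using hone 0
      · have hc : ((t + 1 : ℕ) : Fin N) = ((t : ℕ) : Fin N) + 1 := by push_cast; ring
        rw [hc, ld_step op hLD hone, ih hpos]
        have : (0 : Fin N) + 1 = 1 := by ring
        rw [this, hone]
  intro b
  have hb : ((b.val + N : ℕ) : Fin N) = b := by
    push_cast [Fin.natCast_self, Fin.cast_val_eq_self]
    ring
  have := key (b.val + N) (by have := Nat.pos_of_ne_zero (NeZero.ne N); omega)
  rwa [hb] at this

include hLD hone in
lemma ld_incr : ∀ a b : Fin N, op a b = 0 ∨ a.val < (op a b).val := by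
  have key : ∀ d : ℕ, ∀ a : Fin N, N - a.val ≤ d → ∀ t : ℕ, 0 < t →
      op a ((t : ℕ) : Fin N) = 0 ∨ a.val < (op a ((t : ℕ) : Fin N)).val := by
    intro d
    induction d with
    | zero => intro a ha; have := a.isLt; omega
    | succ d ihd =>
      intro a ha t ht
      induction t with
      | zero => omega
      | succ t iht =>
        rcases Nat.eq_zero_or_pos t with h0 | hpos
        · subst h0
          have h1 : ((1 : ℕ) : Fin N) = 1 := by push_cast; ring
          rw [h1, hone]
          exact fin_succ_cases a
        · have hc : ((t + 1 : ℕ) : Fin N) = ((t : ℕ) : Fin N) + 1 := by push_cast; ring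
          rw [hc, ld_step op hLD hone]
          rcases iht hpos with hc0 | hlt
          · rw [hc0, ld_zero_row op hLD hone]
            exact fin_succ_cases a
          · set c := op a ((t : ℕ) : Fin N) with hcdef
            have hcN := c.isLt
            have h2 : a + 1 = ((a.val + 1 : ℕ) : Fin N) := fin_cast_succ a
            rw [h2]
            rcases ihd c (by omega) (a.val + 1) (by omega) with h | h
            · exact Or.inl h
            · exact Or.inr (by omega)
  intro a b
  have hb : ((b.val + N : ℕ) : Fin N) = b := by
    push_cast [Fin.natCast_self, Fin.cast_val_eq_self]
    ring
  have := key (N - a.val) a le_rfl (b.val + N)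
    (by have := Nat.pos_of_ne_zero (NeZero.ne N); omega)
  rwa [hb] at this

end Generic

lemma cast_val_cast {N M : ℕ} [NeZero N] [NeZero M] (h : N ∣ M) (t : ℕ) :
    (((t : Fin M)).val : Fin N) = (t : Fin N) := by
  ext
  rw [Fin.val_natCast, Fin.val_natCast, Fin.val_natCast, Nat.mod_mod_of_dvd t h]

section Hom
open Fin.CommRing
variable {N M : ℕ} [NeZero N] [NeZero M] (hdvd : N ∣ M)
  (op₀ : Fin N → Fin N → Fin N)
  (hLD₀ : ∀ a b c, op₀ a (op₀ b c) = op₀ (op₀ a b) (op₀ a c))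
  (hone₀ : ∀ a, op₀ a 1 = a + 1)
  (op₁ : Fin M → Fin M → Fin M)
  (hLD₁ : ∀ a b c, op₁ a (op₁ b c) = op₁ (op₁ a b) (op₁ a c))
  (hone₁ : ∀ a, op₁ a 1 = a + 1)

include hdvd hLD₀ hone₀ hLD₁ hone₁ in
lemma ld_hom : ∀ a b : Fin M,
    (((op₁ a b).val : ℕ) : Fin N) = op₀ ((a.val : ℕ) : Fin N) ((b.val : ℕ) : Fin N) := by
  have hπ : ∀ t : ℕ, (((t : Fin M)).val : Fin N) = (t : Fin N) := cast_val_cast hdvd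
  have key : ∀ d : ℕ, ∀ a : Fin M, M - a.val ≤ d → ∀ t : ℕ, 0 < t →
      (((op₁ a ((t : ℕ) : Fin M)).val : ℕ) : Fin N)
        = op₀ ((a.val : ℕ) : Fin N) ((t : ℕ) : Fin N) := by
    intro d
    induction d with
    | zero => intro a ha; have := a.isLt; omega
    | succ d ihd =>
      intro a ha t ht
      induction t with
      | zero => omega
      | succ t iht =>
        rcases Nat.eq_zero_or_pos t with h0 | hpos
        · subst h0
          have h1M : ((1 : ℕ) : Fin M) = 1 := by push_cast; ring
          have h1N : ((1 : ℕ) : Fin N) = 1 := by push_cast; ring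
          rw [h1M, h1N, hone₁, hone₀, fin_cast_succ a, hπ, Nat.cast_add_one]
        · have hcM : ((t + 1 : ℕ) : Fin M) = ((t : ℕ) : Fin M) + 1 := by push_cast; ring
          have hcN : ((t + 1 : ℕ) : Fin N) = ((t : ℕ) : Fin N) + 1 := by push_cast; ring
          rw [hcM, hcN, ld_step op₁ hLD₁ hone₁, ld_step op₀ hLD₀ hone₀, ← iht hpos]
          set c := op₁ a ((t : ℕ) : Fin M) with hcdef
          rcases ld_incr op₁ hLD₁ hone₁ a ((t : ℕ) : Fin M) with hc0 | hlt
          · rw [← hcdef] at hc0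
            rw [hc0, ld_zero_row op₁ hLD₁ hone₁]
            have : (((0 : Fin M).val : ℕ) : Fin N) = 0 := by simp
            rw [this, ld_zero_row op₀ hLD₀ hone₀, fin_cast_succ a, hπ,
              Nat.cast_add_one]
          · rw [← hcdef] at hlt
            have hcN' := c.isLt
            have h2 : a + 1 = ((a.val + 1 : ℕ) : Fin M) := fin_cast_succ a
            rw [h2, ihd c (by omega) (a.val + 1) (by omega), Nat.cast_add_one,
              fin_cast_succ ((a.val : ℕ) : Fin N)]
  intro a b
  have hb : ((b.val + M : ℕ) : Fin M) = b := by
    push_cast [Fin.natCast_self, Fin.cast_val_eq_self]; ring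
  have hbN : ((b.val + M : ℕ) : Fin N) = ((b.val : ℕ) : Fin N) := by
    obtain ⟨c, rfl⟩ := hdvd
    push_cast [Fin.natCast_self]
    simp
  have := key (M - a.val) a le_rfl (b.val + M)
    (by have := Nat.pos_of_ne_zero (NeZero.ne M); omega)
  rwa [hb, hbN] at this

end Hom

/-- if the period of `a < 2^n` doubles from `A_n` to `A_{n+1}`, say
`p_n(a) = 2^k` and `p_{n+1}(a) = 2^{k+1}`, then `a *_{n+1} 2^k = 2^n` in `A_{n+1}`. -/
theorem period_doubles_hits_pow (n : ℕ) (a : ℕ) (ha : a < 2^n) (k : ℕ)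
    (op₀ : Fin (2^n) → Fin (2^n) → Fin (2^n)) (hop₀ : IsCyclicLD n op₀)
    (op₁ : Fin (2^(n+1)) → Fin (2^(n+1)) → Fin (2^(n+1))) (hop₁ : IsCyclicLD (n+1) op₁)
    (hk : period n op₀ ((a : ℕ) : Fin (2^n)) = 2^k)
    (hdouble : period (n+1) op₁ ((a : ℕ) : Fin (2^(n+1))) = 2^(k+1)) :
    op₁ ((a : ℕ) : Fin (2^(n+1))) ((2^k : ℕ) : Fin (2^(n+1))) = ((2^n : ℕ) : Fin (2^(n+1))) := by
  obtain ⟨hLD₀, hone₀⟩ := hop₀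
  obtain ⟨hLD₁, hone₁⟩ := hop₁
  have hdvd : (2^n : ℕ) ∣ 2^(n+1) := pow_dvd_pow 2 (Nat.le_succ n)
  -- period in A_n is attained: op₀ a (2^k) = 0
  have hmem : op₀ ((a : ℕ) : Fin (2^n)) ((2^k : ℕ) : Fin (2^n)) = 0 := by
    have hne : {p : ℕ | 0 < p ∧ op₀ ((a : ℕ) : Fin (2^n)) ((p : ℕ) : Fin (2^n)) = 0}.Nonempty := by
      by_contra hemp
      rw [Set.not_nonempty_iff_eq_empty] at hemp
      have : period n op₀ ((a : ℕ) : Fin (2^n)) = 0 := by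
        rw [period, hemp, Nat.sInf_empty]
      rw [hk] at this
      exact absurd this (by positivity)
    have := Nat.sInf_mem hne
    rw [← period, hk] at this
    exact this.2
  -- 2^k is below the period in A_{n+1}: op₁ a (2^k) ≠ 0
  have hne0 : op₁ ((a : ℕ) : Fin (2^(n+1))) ((2^k : ℕ) : Fin (2^(n+1))) ≠ 0 := by
    intro h0
    have hmem' : (2^k : ℕ) ∈
        {p : ℕ | 0 < p ∧ op₁ ((a : ℕ) : Fin (2^(n+1))) ((p : ℕ) : Fin (2^(n+1))) = 0} :=
      ⟨by positivity, h0⟩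
    have hlt : (2^k : ℕ) < period (n+1) op₁ ((a : ℕ) : Fin (2^(n+1))) := by
      rw [hdouble]
      exact Nat.pow_lt_pow_succ one_lt_two
    exact Nat.notMem_of_lt_sInf hlt hmem'
  -- homomorphism
  set c := op₁ ((a : ℕ) : Fin (2^(n+1))) ((2^k : ℕ) : Fin (2^(n+1))) with hcdef
  have hhom := ld_hom hdvd op₀ hLD₀ hone₀ op₁ hLD₁ hone₁
    ((a : ℕ) : Fin (2^(n+1))) ((2^k : ℕ) : Fin (2^(n+1)))
  rw [cast_val_cast hdvd, cast_val_cast hdvd, hmem] at hhom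
  -- hhom : ((c.val : ℕ) : Fin (2^n)) = 0, so 2^n ∣ c.val
  have hdvd' : (2^n : ℕ) ∣ c.val := by
    have := congrArg Fin.val hhom
    rw [Fin.val_natCast] at this
    exact Nat.dvd_of_mod_eq_zero this
  have hclt : c.val < 2^(n+1) := c.isLt
  have hc0 : c.val ≠ 0 := by
    intro h
    exact hne0 (Fin.ext (by simp [h]))
  have hM : (2:ℕ)^(n+1) = 2 * 2^n := by ring
  have hcval : c.val = 2^n := by
    obtain ⟨q, hq⟩ := hdvd'
    have hq2 : q < 2 := by
      apply Nat.lt_of_mul_lt_mul_left (a := 2^n)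
      omega
    have hq1 : q ≠ 0 := by
      rintro rfl
      omega
    have hpos : (0:ℕ) < 2^n := by positivity
    interval_cases q <;> omega
  ext
  rw [hcval, Fin.val_natCast, Nat.mod_eq_of_lt (Nat.pow_lt_pow_succ one_lt_two)]
end
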